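/- arXiv:2109.12944 — 4 statements merged into one kernel-verified Lean document; each statement's English description precedes it below -/
import Mathlib

section
/- Let ω be a radial weight with ω ∈ D̂ and let β > 0. Then there exists a constant C = C(ω, β) > 0 such that x^β ∫_0^1 r^x (1−r)^β ω(r) dr ≤ C ω_x for all 0 < x < ∞. -/
open MeasureTheory Set Filter
open scoped ENNReal

/-- The tail integral `ω̂(r) = ∫_r^1 ω(s) ds` of a radial weight. -/
noncomputable def wHat (ω : ℝ → ℝ) (r : ℝ) : ℝ := ∫ s in r..1, ω s

/-- The moment `ω_x = ∫_0^1 s^x ω(s) ds` of a radial weight. -/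
noncomputable def wMom (ω : ℝ → ℝ) (x : ℝ) : ℝ := ∫ s in (0:ℝ)..1, s ^ x * ω s

/-- A radial weight: nonnegative, integrable on `[0,1)`, with positive tail integrals. -/
def IsRadialWeight (ω : ℝ → ℝ) : Prop :=
  (∀ s ∈ Set.Ico (0:ℝ) 1, 0 ≤ ω s) ∧
    MeasureTheory.IntegrableOn ω (Set.Ico (0:ℝ) 1) ∧
    ∀ r ∈ Set.Ico (0:ℝ) 1, 0 < wHat ω r

/-- The class `D̂` of radial weights. -/
def Dhat (ω : ℝ → ℝ) : Prop :=
  ∃ C > (1:ℝ), ∀ r ∈ Set.Ico (0:ℝ) 1, wHat ω r ≤ C * wHat ω ((1 + r) / 2)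

/-- The class `Ď` of radial weights. -/
def Dcheck (ω : ℝ → ℝ) : Prop :=
  ∃ k > (1:ℝ), ∃ C > (1:ℝ), ∀ r ∈ Set.Ico (0:ℝ) 1,
    wHat ω r ≥ C * wHat ω (1 - (1 - r) / k)

/-- The class `D = D̂ ∩ Ď`. -/
def Dclass (ω : ℝ → ℝ) : Prop := Dhat ω ∧ Dcheck ω

/-- The class `M`: `ω_x ≥ C ω_{kx}` for all `x ≥ 1`. -/
def Mclass (ω : ℝ → ℝ) : Prop :=
  ∃ C > (1:ℝ), ∃ k > (1:ℝ), ∀ x : ℝ, 1 ≤ x → wMom ω x ≥ C * wMom ω (k * x)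

/-- The fractional derivative `D^μ f(z) = Σ (f̂(n)/μ_{2n+1}) zⁿ` induced by a radial
weight `μ`, acting on the Taylor coefficients `a` of `f`. -/
noncomputable def Dfrac (μ : ℝ → ℝ) (a : ℕ → ℂ) (z : ℂ) : ℂ :=
  ∑' n : ℕ, (a n / ((wMom μ (2 * (n : ℝ) + 1) : ℝ) : ℂ)) * z ^ n

/-- `∫_𝔻 |f(z)|^p w(|z|) dA(z)` as a Lebesgue integral (up to the normalization `1/π`). -/
noncomputable def discLInt (p : ℝ) (w : ℝ → ℝ) (f : ℂ → ℂ) : ℝ≥0∞ :=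
  ∫⁻ z in Metric.ball (0:ℂ) 1, ENNReal.ofReal (‖f z‖ ^ p * w ‖z‖)


private lemma aux_sq_le : ∀ k : ℕ, ((k:ℝ)+1)^2 ≤ 4 * 2^k := by
  intro k
  induction k with
  | zero => norm_num
  | succ n ih =>
    rcases Nat.lt_or_ge n 2 with h | h
    · interval_cases n <;> norm_num
    · have hn : (2:ℝ) ≤ (n:ℝ) := by exact_mod_cast h
      have h2 : (2:ℝ)^(n+1) = 2*2^n := by ring
      push_cast
      nlinarith [ih, h2, hn]

private lemma aux_congr (f g : ℝ → ℝ) (hfg : ∀ s ∈ Set.Ico (0:ℝ) 1, f s = g s)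
    {a b : ℝ} (ha : 0 ≤ a) (hab : a ≤ b) (hb : b ≤ 1) :
    ∫ s in a..b, f s = ∫ s in a..b, g s := by
  apply intervalIntegral.integral_congr_ae
  rw [MeasureTheory.ae_iff]
  refine measure_mono_null ?_ (Real.volume_singleton (a := 1))
  intro x hx
  simp only [Set.mem_setOf_eq, Classical.not_imp] at hx
  obtain ⟨hmem, hne⟩ := hx
  rw [Set.uIoc_of_le hab] at hmem
  simp only [Set.mem_singleton_iff]
  by_contra h1
  exact hne (hfg x ⟨le_of_lt (lt_of_le_of_lt ha hmem.1),
    lt_of_le_of_ne (hmem.2.trans hb) h1⟩)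


private lemma aux_phi_int (g : ℝ → ℝ) (hg : Integrable g) (h0 : ∀ s, 0 ≤ g s)
    (hsupp : ∀ s, s ∉ Set.Ico (0:ℝ) 1 → g s = 0)
    (φ : ℝ → ℝ) (hφm : Measurable φ) (hφb : ∀ s ∈ Set.Ico (0:ℝ) 1, |φ s| ≤ 1) :
    Integrable (fun s => φ s * g s) := by
  refine hg.mono' (hφm.aestronglyMeasurable.mul hg.aestronglyMeasurable)
    (Filter.Eventually.of_forall ?_)
  intro s
  by_cases hs : s ∈ Set.Ico (0:ℝ) 1
  · rw [norm_mul]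
    calc ‖φ s‖ * ‖g s‖ ≤ 1 * ‖g s‖ :=
          mul_le_mul_of_nonneg_right (by simpa [Real.norm_eq_abs] using hφb s hs) (norm_nonneg _)
      _ = g s := by rw [one_mul, Real.norm_eq_abs, abs_of_nonneg (h0 s)]
  · simp [hsupp s hs, h0 s]

private lemma aux_low (g : ℝ → ℝ) (hg : Integrable g) (h0 : ∀ s, 0 ≤ g s)
    (hsupp : ∀ s, s ∉ Set.Ico (0:ℝ) 1 → g s = 0)
    (x : ℝ) (hx0 : 0 < x) (a : ℝ) (ha0 : 0 ≤ a) (ha1 : a ≤ 1) :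
    a ^ x * (∫ s in a..1, g s) ≤ ∫ s in (0:ℝ)..1, s ^ x * g s := by
  have hxInt : Integrable (fun s => s ^ x * g s) := by
    refine aux_phi_int g hg h0 hsupp _ ((Real.continuous_rpow_const hx0.le).measurable) ?_
    intro s hs
    rw [abs_of_nonneg (Real.rpow_nonneg hs.1 x)]
    exact Real.rpow_le_one hs.1 hs.2.le hx0.le
  have hsplit : ∫ s in (0:ℝ)..1, s ^ x * g s
      = (∫ s in (0:ℝ)..a, s ^ x * g s) + ∫ s in a..1, s ^ x * g s :=
    (intervalIntegral.integral_add_adjacent_intervals hxInt.intervalIntegrable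
      hxInt.intervalIntegrable).symm
  have h1 : 0 ≤ ∫ s in (0:ℝ)..a, s ^ x * g s :=
    intervalIntegral.integral_nonneg ha0
      (fun u hu => mul_nonneg (Real.rpow_nonneg hu.1 x) (h0 u))
  have h2 : (∫ s in a..1, a ^ x * g s) ≤ ∫ s in a..1, s ^ x * g s := by
    refine intervalIntegral.integral_mono_on ha1 ((hg.const_mul _).intervalIntegrable)
      hxInt.intervalIntegrable ?_
    intro s hs
    exact mul_le_mul_of_nonneg_right (Real.rpow_le_rpow ha0 hs.1 hx0.le) (h0 s)
  rw [intervalIntegral.integral_const_mul] at h2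
  linarith

set_option maxHeartbeats 1000000 in
private lemma main_clean (g : ℝ → ℝ) (hg : Integrable g) (h0 : ∀ s, 0 ≤ g s)
    (hsupp : ∀ s, s ∉ Set.Ico (0:ℝ) 1 → g s = 0)
    (C : ℝ) (hC1 : 1 < C)
    (hCg : ∀ r ∈ Set.Ico (0:ℝ) 1, (∫ s in r..1, g s) ≤ C * ∫ s in ((1+r)/2)..1, g s)
    (β : ℝ) (hβ : 0 < β) :
    ∃ K > (0:ℝ), ∀ x : ℝ, 1 ≤ x →
      x ^ β * ∫ r in (0:ℝ)..1, r ^ x * ((1 - r) ^ β * g r)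
        ≤ K * ∫ s in (0:ℝ)..1, s ^ x * g s := by
  have hC0 : (0:ℝ) < C := lt_trans one_pos hC1
  set L : ℝ := (β+1) * Real.log 2 + Real.log C with hL
  have hlog2 : 0 < Real.log 2 := Real.log_pos one_lt_two
  have hlogC : 0 < Real.log C := Real.log_pos hC1
  set A : ℝ := Real.exp (2 * L^2) with hA
  have hApos : 0 < A := Real.exp_pos _
  -- uniform bound on the dyadic terms
  have hterm : ∀ k : ℕ, ((2:ℝ)^k)^β * Real.exp (-((2:ℝ)^k)/2) * C^(k+1) ≤ A * (1/2)^k := by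
    intro k
    have e1 : ((2:ℝ)^k)^β = Real.exp (((k:ℝ) * Real.log 2) * β) := by
      rw [Real.rpow_def_of_pos (by positivity), Real.log_pow]
    have e2 : (C:ℝ)^(k+1) = Real.exp (Real.log C * ((k:ℝ)+1)) := by
      rw [← Real.rpow_natCast C (k+1), Real.rpow_def_of_pos hC0]
      push_cast
      ring_nf
    have e3 : ((1:ℝ)/2)^k = Real.exp (-(Real.log 2) * (k:ℝ)) := by
      rw [← Real.rpow_natCast ((1:ℝ)/2) k, Real.rpow_def_of_pos (by norm_num)]
      rw [one_div, Real.log_inv]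
    rw [e1, e2, e3, ← Real.exp_add, ← Real.exp_add, ← Real.exp_add, Real.exp_le_exp]
    have hstep2 : ((k:ℝ)+1)*L ≤ ((k:ℝ)+1)^2/8 + 2*L^2 := by
      nlinarith [sq_nonneg ((k:ℝ)+1-4*L)]
    have hstep3 : ((k:ℝ)+1)^2/8 ≤ (2:ℝ)^k/2 := by nlinarith [aux_sq_le k]
    have hstep1 : (k:ℝ)*β*Real.log 2 + (k:ℝ)*Real.log 2 + ((k:ℝ)+1)*Real.log C
        ≤ ((k:ℝ)+1)*L := by
      rw [hL]
      nlinarith [mul_nonneg hβ.le hlog2.le, hlog2.le]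
    nlinarith [hstep1, hstep2, hstep3]
  have hsum : ∀ N : ℕ, (∑ k ∈ Finset.range N,
      ((2:ℝ)^k)^β * Real.exp (-((2:ℝ)^k)/2) * C^(k+1)) ≤ 2*A := by
    intro N
    calc (∑ k ∈ Finset.range N, ((2:ℝ)^k)^β * Real.exp (-((2:ℝ)^k)/2) * C^(k+1))
        ≤ ∑ k ∈ Finset.range N, A * (1/2)^k :=
          Finset.sum_le_sum (fun k _ => hterm k)
      _ = A * ∑ k ∈ Finset.range N, ((1:ℝ)/2)^k := by rw [Finset.mul_sum]
      _ ≤ A * 2 := mul_le_mul_of_nonneg_left (sum_geometric_two_le N) hApos.le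
      _ = 2*A := by ring
  refine ⟨2 * (2*A + 1), by positivity, ?_⟩
  intro x hx
  have hx0 : (0:ℝ) < x := lt_of_lt_of_le one_pos hx
  set t : ℝ := 1 - 1/(2*x) with ht
  have hinvpos : 0 < 1/(2*x) := by positivity
  have hinv : 1/(2*x) ≤ 1/2 := by
    apply one_div_le_one_div_of_le two_pos
    linarith
  have ht0 : (0:ℝ) ≤ t := by rw [ht]; linarith
  have ht1 : t < 1 := by rw [ht]; linarith
  have hWnn : ∀ a : ℝ, a ≤ 1 → 0 ≤ ∫ s in a..1, g s := fun a ha =>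
    intervalIntegral.integral_nonneg ha (fun u _ => h0 u)
  have hWmono : ∀ a b : ℝ, a ≤ b → b ≤ 1 → (∫ s in b..1, g s) ≤ ∫ s in a..1, g s := by
    intro a b hab hb1
    have h1 : ∫ s in a..1, g s = (∫ s in a..b, g s) + ∫ s in b..1, g s :=
      (intervalIntegral.integral_add_adjacent_intervals hg.intervalIntegrable
        hg.intervalIntegrable).symm
    have h2 : 0 ≤ ∫ s in a..b, g s :=
      intervalIntegral.integral_nonneg hab (fun u _ => h0 u)
    linarith
  have hiter : ∀ n : ℕ, ∀ r : ℝ, 0 ≤ r → r < 1 →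
      (∫ s in r..1, g s) ≤ C ^ n * ∫ s in (1 - (1-r)/2^n)..1, g s := by
    intro n
    induction n with
    | zero =>
      intro r hr0 hr1
      have harg : 1 - (1-r)/2^(0:ℕ) = r := by norm_num
      rw [harg, pow_zero, one_mul]
    | succ n ih =>
      intro r hr0 hr1
      have h1 := hCg r ⟨hr0, hr1⟩
      have h2 := ih ((1+r)/2) (by linarith) (by linarith)
      have h2n : (2:ℝ)^n ≠ 0 := by positivity
      have harg : 1 - (1 - (1+r)/2)/2^n = 1 - (1-r)/2^(n+1) := by
        field_simp
        ring
      rw [harg] at h2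
      calc (∫ s in r..1, g s) ≤ C * ∫ s in ((1+r)/2)..1, g s := h1
        _ ≤ C * (C^n * ∫ s in (1 - (1-r)/2^(n+1))..1, g s) :=
            mul_le_mul_of_nonneg_left h2 hC0.le
        _ = C^(n+1) * ∫ s in (1 - (1-r)/2^(n+1))..1, g s := by ring
  -- integrability of the full integrand
  have hfull : Integrable (fun r => r ^ x * ((1-r)^β * g r)) := by
    have hm : Measurable (fun r : ℝ => r ^ x * (1-r)^β) :=
      (((Real.continuous_rpow_const hx0.le)).mul
        ((Real.continuous_rpow_const hβ.le).comp (continuous_const.sub continuous_id))).measurable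
    have hb : ∀ s ∈ Set.Ico (0:ℝ) 1, |s ^ x * (1-s)^β| ≤ 1 := by
      intro s hs
      have h1 : (0:ℝ) ≤ s ^ x := Real.rpow_nonneg hs.1 x
      have h2 : (0:ℝ) ≤ (1-s)^β := Real.rpow_nonneg (by linarith [hs.2]) β
      rw [abs_of_nonneg (mul_nonneg h1 h2)]
      calc s ^ x * (1-s)^β ≤ 1 * 1 := by
            apply mul_le_mul (Real.rpow_le_one hs.1 hs.2.le hx0.le)
              (Real.rpow_le_one (by linarith [hs.2]) (by linarith [hs.1]) hβ.le) h2 one_pos.le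
        _ = 1 := by norm_num
    have h := aux_phi_int g hg h0 hsupp _ hm hb
    simpa [mul_assoc] using h
  have hx_beta_nn : (0:ℝ) ≤ x ^ β := Real.rpow_nonneg hx0.le β
  -- lower bound for the moment
  have hthalf : (1/2:ℝ) ≤ t ^ x := by
    have hs1 : (-1:ℝ) ≤ -(1/(2*x)) := by linarith
    have h := one_add_mul_self_le_rpow_one_add hs1 hx
    have he1 : 1 + (-(1/(2*x))) = t := by rw [ht]; ring
    have he2 : 1 + x * (-(1/(2*x))) = 1/2 := by field_simp; ring
    rw [he1, he2] at h
    exact h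
  have hWt : (∫ s in t..1, g s) ≤ 2 * ∫ s in (0:ℝ)..1, s ^ x * g s := by
    have hl := aux_low g hg h0 hsupp x hx0 t ht0 ht1.le
    have h2 : (1/2) * (∫ s in t..1, g s) ≤ t ^ x * (∫ s in t..1, g s) :=
      mul_le_mul_of_nonneg_right hthalf (hWnn t ht1.le)
    linarith
  -- tail piece
  have htail : x ^ β * ∫ r in t..1, r ^ x * ((1-r)^β * g r) ≤ ∫ s in t..1, g s := by
    have hq0 : (0:ℝ) ≤ 1/(2*x) := hinvpos.le
    have h1 : (∫ r in t..1, r ^ x * ((1-r)^β * g r))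
        ≤ (1/(2*x))^β * ∫ s in t..1, g s := by
      have hmono := intervalIntegral.integral_mono_on ht1.le hfull.intervalIntegrable
        ((hg.const_mul ((1/(2*x))^β)).intervalIntegrable) ?_
      · rwa [intervalIntegral.integral_const_mul] at hmono
      intro r hr
      have hr0 : 0 ≤ r := le_trans ht0 hr.1
      have hr1 : (0:ℝ) ≤ 1 - r := by linarith [hr.2]
      have hrx : r ^ x ≤ 1 := Real.rpow_le_one hr0 hr.2 hx0.le
      have hrβ : (1-r)^β ≤ (1/(2*x))^β := by
        apply Real.rpow_le_rpow hr1 ?_ hβ.le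
        have := hr.1
        rw [ht] at this
        linarith
      calc r ^ x * ((1-r)^β * g r) ≤ 1 * ((1/(2*x))^β * g r) := by
            apply mul_le_mul hrx (mul_le_mul_of_nonneg_right hrβ (h0 r))
              (mul_nonneg (Real.rpow_nonneg hr1 β) (h0 r)) one_pos.le
        _ = (1/(2*x))^β * g r := one_mul _
    have h2 : x ^ β * ((1/(2*x))^β * ∫ s in t..1, g s) ≤ ∫ s in t..1, g s := by
      have he : x ^ β * (1/(2*x))^β = ((1:ℝ)/2)^β := by
        rw [← Real.mul_rpow hx0.le hq0]
        congr 1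
        field_simp
      rw [← mul_assoc, he]
      calc ((1:ℝ)/2)^β * ∫ s in t..1, g s ≤ 1 * ∫ s in t..1, g s :=
            mul_le_mul_of_nonneg_right
              (Real.rpow_le_one (by norm_num) (by norm_num) hβ.le) (hWnn t ht1.le)
        _ = ∫ s in t..1, g s := one_mul _
    calc x ^ β * ∫ r in t..1, r ^ x * ((1-r)^β * g r)
        ≤ x ^ β * ((1/(2*x))^β * ∫ s in t..1, g s) :=
          mul_le_mul_of_nonneg_left h1 hx_beta_nn
      _ ≤ ∫ s in t..1, g s := h2
  -- the dyadic points
  set G : ℕ → ℝ := fun k => max 0 (1 - 2^k/(2*x)) with hGdef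
  have hG0 : ∀ k, (0:ℝ) ≤ G k := fun k => le_max_left _ _
  have hGmono : ∀ k : ℕ, G (k+1) ≤ G k := by
    intro k
    apply max_le_max le_rfl
    have hp : (2:ℝ)^k ≤ 2^(k+1) := by
      have := pow_nonneg (zero_le_two (α := ℝ)) k
      rw [pow_succ]
      linarith
    have : (2:ℝ)^k/(2*x) ≤ 2^(k+1)/(2*x) := by
      apply div_le_div_of_nonneg_right hp ?_
      · positivity
    linarith
  have hGt : ∀ k : ℕ, G k ≤ t := by
    intro k
    apply max_le ht0
    have hp : (1:ℝ) ≤ 2^k := one_le_pow₀ one_le_two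
    have : 1/(2*x) ≤ (2:ℝ)^k/(2*x) := by
      apply div_le_div_of_nonneg_right hp ?_
      · positivity
    rw [ht]; linarith
  have hG0eq : G 0 = t := by
    have : G 0 = max 0 (1 - 2^(0:ℕ)/(2*x)) := rfl
    rw [this, pow_zero, ht]
    exact max_eq_right ht0
  -- tail comparison at the dyadic points
  have hWG : ∀ k : ℕ, (∫ s in (G (k+1))..1, g s) ≤ C^(k+1) * ∫ s in t..1, g s := by
    intro k
    rcases le_or_gt 0 (1 - 2^(k+1)/(2*x)) with h | h
    · have hGe : G (k+1) = 1 - 2^(k+1)/(2*x) := max_eq_right h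
      have hppos : (0:ℝ) < 2^(k+1)/(2*x) := by positivity
      have hlt : G (k+1) < 1 := by rw [hGe]; linarith
      have hi := hiter (k+1) (G (k+1)) (hG0 _) hlt
      have harg : 1 - (1 - G (k+1))/2^(k+1) = t := by
        rw [hGe, ht]
        have h2n : (2:ℝ)^(k+1) ≠ 0 := by positivity
        field_simp
        ring
      rwa [harg] at hi
    · have hGe : G (k+1) = 0 := max_eq_left h.le
      have hi := hiter (k+1) 0 le_rfl one_pos
      have harg : 1 - (1 - (0:ℝ))/2^(k+1) = 1 - 1/2^(k+1) := by norm_num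
      rw [harg] at hi
      have h2 : 2*x < 2^(k+1) := by
        have hd : (1:ℝ) < 2^(k+1)/(2*x) := by linarith
        have := (one_lt_div (by positivity : (0:ℝ) < 2*x)).mp hd
        linarith
      have hmono : (∫ s in (1 - 1/2^(k+1) : ℝ)..1, g s) ≤ ∫ s in t..1, g s := by
        have hq : (0:ℝ) < 1/2^(k+1) := by positivity
        apply hWmono t (1 - 1/2^(k+1)) ?_ (by linarith)
        have hle : (1:ℝ)/2^(k+1) ≤ 1/(2*x) :=
          one_div_le_one_div_of_le (by positivity) h2.le
        rw [ht]; linarith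
      rw [hGe]
      calc (∫ s in (0:ℝ)..1, g s) ≤ C^(k+1) * ∫ s in (1 - 1/2^(k+1) : ℝ)..1, g s := hi
        _ ≤ C^(k+1) * ∫ s in t..1, g s :=
            mul_le_mul_of_nonneg_left hmono (by positivity)
  -- the per-interval estimate
  have hpiece : ∀ k : ℕ, x ^ β * ∫ s in (G (k+1))..(G k), s ^ x * ((1-s)^β * g s)
      ≤ (((2:ℝ)^k)^β * Real.exp (-((2:ℝ)^k)/2) * C^(k+1)) * ∫ s in t..1, g s := by
    intro k
    set Kc : ℝ := Real.exp (-((2:ℝ)^k)/2) * ((2:ℝ)^(k+1)/(2*x))^β with hKc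
    have hKc0 : (0:ℝ) ≤ Kc := by
      apply mul_nonneg (Real.exp_pos _).le (Real.rpow_nonneg (by positivity) β)
    have hbound : ∀ s ∈ Set.Icc (G (k+1)) (G k), s ^ x * ((1-s)^β * g s) ≤ Kc * g s := by
      intro s hs
      have hs0 : 0 ≤ s := le_trans (hG0 _) hs.1
      have hs1 : s ≤ t := le_trans hs.2 (hGt k)
      have hs1' : (0:ℝ) ≤ 1 - s := by linarith
      have hsx : s ^ x ≤ Real.exp (-((2:ℝ)^k)/2) := by
        rcases eq_or_lt_of_le hs0 with hh | hh
        · rw [← hh, Real.zero_rpow (ne_of_gt hx0)]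
          positivity
        · have hGk : s ≤ 1 - 2^k/(2*x) := by
            rcases le_or_gt (1 - 2^k/(2*x)) 0 with h2 | h2
            · exfalso
              have : G k = 0 := max_eq_left h2
              rw [this] at hs
              linarith [hs.2]
            · have : G k = 1 - 2^k/(2*x) := max_eq_right h2.le
              rw [this] at hs
              exact hs.2
          have hb0 : (0:ℝ) ≤ 1 - 2^k/(2*x) := le_trans hh.le hGk
          have h1 : s ^ x ≤ (1 - 2^k/(2*x)) ^ x := Real.rpow_le_rpow hs0 hGk hx0.le
          have he : (1 - 2^k/(2*x)) ≤ Real.exp (-((2:ℝ)^k/(2*x))) := by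
            have := Real.add_one_le_exp (-((2:ℝ)^k/(2*x)))
            linarith
          have h2 : (1 - 2^k/(2*x)) ^ x ≤ Real.exp (-((2:ℝ)^k/(2*x)) * x) := by
            calc (1 - 2^k/(2*x)) ^ x ≤ (Real.exp (-((2:ℝ)^k/(2*x)))) ^ x :=
                  Real.rpow_le_rpow hb0 he hx0.le
              _ = Real.exp (-((2:ℝ)^k/(2*x)) * x) := (Real.exp_mul _ x).symm
          have harg : -((2:ℝ)^k/(2*x)) * x = -((2:ℝ)^k)/2 := by
            field_simp
          rw [harg] at h2
          exact h1.trans h2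
      have hsβ : (1-s)^β ≤ ((2:ℝ)^(k+1)/(2*x))^β := by
        apply Real.rpow_le_rpow hs1' ?_ hβ.le
        have hle : 1 - 2^(k+1)/(2*x) ≤ G (k+1) := le_max_right _ _
        linarith [hs.1]
      calc s ^ x * ((1-s)^β * g s)
          ≤ Real.exp (-((2:ℝ)^k)/2) * (((2:ℝ)^(k+1)/(2*x))^β * g s) := by
            apply mul_le_mul hsx (mul_le_mul_of_nonneg_right hsβ (h0 s))
              (mul_nonneg (Real.rpow_nonneg hs1' β) (h0 s)) (Real.exp_pos _).le
        _ = Kc * g s := by rw [hKc]; ring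
    have hint1 := intervalIntegral.integral_mono_on (hGmono k) hfull.intervalIntegrable
      ((hg.const_mul Kc).intervalIntegrable) hbound
    rw [intervalIntegral.integral_const_mul] at hint1
    have hint2 : (∫ s in (G (k+1))..(G k), g s) ≤ ∫ s in (G (k+1))..1, g s := by
      have hsplit : (∫ s in (G (k+1))..1, g s)
          = (∫ s in (G (k+1))..(G k), g s) + ∫ s in (G k)..1, g s :=
        (intervalIntegral.integral_add_adjacent_intervals hg.intervalIntegrable
          hg.intervalIntegrable).symm
      have := hWnn (G k) (le_trans (hGt k) ht1.le)
      linarith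
    have hint3 := hWG k
    have halg : x ^ β * Kc = ((2:ℝ)^k)^β * Real.exp (-((2:ℝ)^k)/2) := by
      rw [hKc]
      have h1 : (2:ℝ)^(k+1)/(2*x) = (2:ℝ)^k / x := by
        rw [pow_succ]
        field_simp
      rw [h1, Real.div_rpow (by positivity) hx0.le]
      have hxb : x ^ β ≠ 0 := ne_of_gt (Real.rpow_pos_of_pos hx0 β)
      field_simp
    calc x ^ β * ∫ s in (G (k+1))..(G k), s ^ x * ((1-s)^β * g s)
        ≤ x ^ β * (Kc * ∫ s in (G (k+1))..(G k), g s) :=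
          mul_le_mul_of_nonneg_left hint1 hx_beta_nn
      _ ≤ x ^ β * (Kc * ∫ s in (G (k+1))..1, g s) := by
          apply mul_le_mul_of_nonneg_left
            (mul_le_mul_of_nonneg_left hint2 hKc0) hx_beta_nn
      _ ≤ x ^ β * (Kc * (C^(k+1) * ∫ s in t..1, g s)) := by
          apply mul_le_mul_of_nonneg_left
            (mul_le_mul_of_nonneg_left hint3 hKc0) hx_beta_nn
      _ = (x ^ β * Kc) * C^(k+1) * ∫ s in t..1, g s := by ring
      _ = (((2:ℝ)^k)^β * Real.exp (-((2:ℝ)^k)/2) * C^(k+1)) * ∫ s in t..1, g s := by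
          rw [halg]
  -- telescoping
  have hteles : ∀ N : ℕ, x ^ β * ∫ s in (G N)..t, s ^ x * ((1-s)^β * g s)
      ≤ (∑ k ∈ Finset.range N, ((2:ℝ)^k)^β * Real.exp (-((2:ℝ)^k)/2) * C^(k+1))
          * ∫ s in t..1, g s := by
    intro N
    induction N with
    | zero =>
      rw [hG0eq]
      simp
    | succ N ih =>
      have hsplit : (∫ s in (G (N+1))..t, s ^ x * ((1-s)^β * g s))
          = (∫ s in (G (N+1))..(G N), s ^ x * ((1-s)^β * g s))
            + ∫ s in (G N)..t, s ^ x * ((1-s)^β * g s) :=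
        (intervalIntegral.integral_add_adjacent_intervals hfull.intervalIntegrable
          hfull.intervalIntegrable).symm
      rw [hsplit, Finset.sum_range_succ, mul_add, add_mul]
      linarith [add_le_add (hpiece N) ih]
  -- conclusion
  obtain ⟨N, hN⟩ := pow_unbounded_of_one_lt (2*x) (one_lt_two (α := ℝ))
  have hGN : G N = 0 := by
    apply max_eq_left
    have : (1:ℝ) ≤ 2^N/(2*x) := (one_le_div (by positivity : (0:ℝ) < 2*x)).mpr hN.le
    linarith
  have hsplit : (∫ r in (0:ℝ)..1, r ^ x * ((1-r)^β * g r))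
      = (∫ r in (0:ℝ)..t, r ^ x * ((1-r)^β * g r))
        + ∫ r in t..1, r ^ x * ((1-r)^β * g r) :=
    (intervalIntegral.integral_add_adjacent_intervals hfull.intervalIntegrable
      hfull.intervalIntegrable).symm
  have h1 : x ^ β * ∫ r in (0:ℝ)..t, r ^ x * ((1-r)^β * g r)
      ≤ 2*A * ∫ s in t..1, g s := by
    have := hteles N
    rw [hGN] at this
    calc x ^ β * ∫ r in (0:ℝ)..t, r ^ x * ((1-r)^β * g r)
        ≤ (∑ k ∈ Finset.range N, ((2:ℝ)^k)^β * Real.exp (-((2:ℝ)^k)/2) * C^(k+1))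
            * ∫ s in t..1, g s := this
      _ ≤ 2*A * ∫ s in t..1, g s :=
          mul_le_mul_of_nonneg_right (hsum N) (hWnn t ht1.le)
  calc x ^ β * ∫ r in (0:ℝ)..1, r ^ x * ((1 - r) ^ β * g r)
      = (x ^ β * ∫ r in (0:ℝ)..t, r ^ x * ((1-r)^β * g r))
        + x ^ β * ∫ r in t..1, r ^ x * ((1-r)^β * g r) := by rw [hsplit]; ring
    _ ≤ 2*A * (∫ s in t..1, g s) + ∫ s in t..1, g s := add_le_add h1 htail
    _ = (2*A + 1) * ∫ s in t..1, g s := by ring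
    _ ≤ (2*A + 1) * (2 * ∫ s in (0:ℝ)..1, s ^ x * g s) :=
        mul_le_mul_of_nonneg_left hWt (by positivity)
    _ = 2 * (2*A + 1) * ∫ s in (0:ℝ)..1, s ^ x * g s := by ring

/-- **Lemma A(vi).** If `ω ∈ D̂` and `β > 0`, then there is `C = C(ω,β) > 0` with
`x^β ∫_0^1 r^x (1-r)^β ω(r) dr ≤ C ω_x` for all `0 < x < ∞`. -/
theorem moment_weighted_estimate_of_Dhat (ω : ℝ → ℝ) (hω : IsRadialWeight ω)
    (hωD : Dhat ω) (β : ℝ) (hβ : 0 < β) :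
    ∃ C > (0:ℝ), ∀ x : ℝ, 0 < x →
      x ^ β * ∫ r in (0:ℝ)..1, r ^ x * ((1 - r) ^ β * ω r) ≤ C * wMom ω x := by
  obtain ⟨hnn, hint, hpos⟩ := hω
  obtain ⟨C, hC1, hC⟩ := hωD
  set g : ℝ → ℝ := (Set.Ico (0:ℝ) 1).indicator ω with hg_def
  have hgInt : Integrable g := hint.integrable_indicator measurableSet_Ico
  have hg0 : ∀ s, 0 ≤ g s := by
    intro s
    by_cases hs : s ∈ Set.Ico (0:ℝ) 1
    · rw [hg_def, Set.indicator_of_mem hs]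
      exact hnn s hs
    · rw [hg_def, Set.indicator_of_notMem hs]
  have hgsupp : ∀ s, s ∉ Set.Ico (0:ℝ) 1 → g s = 0 := fun s hs =>
    Set.indicator_of_notMem hs ω
  have hgeq : ∀ s ∈ Set.Ico (0:ℝ) 1, ω s = g s := fun s hs =>
    (Set.indicator_of_mem hs ω).symm
  have hHatEq : ∀ r : ℝ, 0 ≤ r → r ≤ 1 → wHat ω r = ∫ s in r..1, g s := by
    intro r h0 h1
    exact aux_congr ω g hgeq h0 h1 le_rfl
  have hCg : ∀ r ∈ Set.Ico (0:ℝ) 1,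
      (∫ s in r..1, g s) ≤ C * ∫ s in ((1+r)/2)..1, g s := by
    intro r hr
    have h := hC r hr
    rwa [hHatEq r hr.1 hr.2.le, hHatEq ((1+r)/2) (by linarith [hr.1]) (by linarith [hr.2.le])] at h
  have hMomEq : ∀ x : ℝ, wMom ω x = ∫ s in (0:ℝ)..1, s ^ x * g s := by
    intro x
    exact aux_congr (fun s => s ^ x * ω s) (fun s => s ^ x * g s)
      (fun s hs => by simp [hgeq s hs]) le_rfl zero_le_one le_rfl
  have hFullEq : ∀ x : ℝ, (∫ r in (0:ℝ)..1, r ^ x * ((1 - r) ^ β * ω r))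
      = ∫ r in (0:ℝ)..1, r ^ x * ((1 - r) ^ β * g r) := by
    intro x
    exact aux_congr _ _ (fun s hs => by simp [hgeq s hs]) le_rfl zero_le_one le_rfl
  obtain ⟨K, hKpos, hmain⟩ := main_clean g hgInt hg0 hgsupp C hC1 hCg β hβ
  have hW0 : 0 < wHat ω 0 := hpos 0 ⟨le_rfl, one_pos⟩
  have hWh : 0 < wHat ω (1/2) := hpos (1/2) ⟨by norm_num, by norm_num⟩
  set c2 : ℝ := 2 * wHat ω 0 / wHat ω (1/2) with hc2_def
  have hc2 : 0 < c2 := by positivity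
  refine ⟨K + c2, by positivity, ?_⟩
  intro x hx0
  have hMnn : 0 ≤ ∫ s in (0:ℝ)..1, s ^ x * g s :=
    intervalIntegral.integral_nonneg zero_le_one
      (fun u hu => mul_nonneg (Real.rpow_nonneg hu.1 x) (hg0 u))
  rcases le_or_gt 1 x with hx1 | hx1
  · have h := hmain x hx1
    rw [hFullEq x, hMomEq x]
    nlinarith [mul_nonneg hc2.le hMnn]
  · rw [hFullEq x, hMomEq x]
    have hmφ : Measurable (fun r : ℝ => r ^ x * (1-r)^β) :=
      (((Real.continuous_rpow_const hx0.le)).mul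
        ((Real.continuous_rpow_const hβ.le).comp (continuous_const.sub continuous_id))).measurable
    have hbφ : ∀ s ∈ Set.Ico (0:ℝ) 1, |s ^ x * (1-s)^β| ≤ 1 := by
      intro s hs
      have h1 : (0:ℝ) ≤ s ^ x := Real.rpow_nonneg hs.1 x
      have h2 : (0:ℝ) ≤ (1-s)^β := Real.rpow_nonneg (by linarith [hs.2]) β
      rw [abs_of_nonneg (mul_nonneg h1 h2)]
      calc s ^ x * (1-s)^β ≤ 1 * 1 := by
            apply mul_le_mul (Real.rpow_le_one hs.1 hs.2.le hx0.le)
              (Real.rpow_le_one (by linarith [hs.2]) (by linarith [hs.1]) hβ.le) h2 one_pos.le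
        _ = 1 := by norm_num
    have hfullInt : Integrable (fun r => r ^ x * ((1-r)^β * g r)) := by
      have h := aux_phi_int g hgInt hg0 hgsupp _ hmφ hbφ
      simpa [mul_assoc] using h
    have hIb : (∫ r in (0:ℝ)..1, r ^ x * ((1-r)^β * g r)) ≤ ∫ s in (0:ℝ)..1, g s := by
      refine intervalIntegral.integral_mono_on zero_le_one hfullInt.intervalIntegrable
        hgInt.intervalIntegrable ?_
      intro s hs
      have h1 : s ^ x ≤ 1 := Real.rpow_le_one hs.1 hs.2 hx0.le
      have h2 : (1-s)^β ≤ 1 := Real.rpow_le_one (by linarith [hs.2]) (by linarith [hs.1]) hβ.le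
      have h2' : (0:ℝ) ≤ (1-s)^β := Real.rpow_nonneg (by linarith [hs.2]) β
      calc s ^ x * ((1-s)^β * g s) ≤ 1 * (1 * g s) := by
            apply mul_le_mul h1 (mul_le_mul_of_nonneg_right h2 (hg0 s))
              (mul_nonneg h2' (hg0 s)) one_pos.le
        _ = g s := by ring
    have hInn : 0 ≤ ∫ r in (0:ℝ)..1, r ^ x * ((1-r)^β * g r) :=
      intervalIntegral.integral_nonneg zero_le_one
        (fun u hu => mul_nonneg (Real.rpow_nonneg hu.1 x)
          (mul_nonneg (Real.rpow_nonneg (by linarith [hu.2]) β) (hg0 u)))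
    have hxβ : x ^ β ≤ 1 := Real.rpow_le_one hx0.le hx1.le hβ.le
    have e0 : wHat ω 0 = ∫ s in (0:ℝ)..1, g s := hHatEq 0 le_rfl zero_le_one
    have eh : wHat ω (1/2) = ∫ s in (1/2:ℝ)..1, g s := hHatEq _ (by norm_num) (by norm_num)
    have hlow2 : (1/2:ℝ) * wHat ω (1/2) ≤ ∫ s in (0:ℝ)..1, s ^ x * g s := by
      have h1 := aux_low g hgInt hg0 hgsupp x hx0 (1/2) (by norm_num) (by norm_num)
      have h2 : (1/2:ℝ) ≤ (1/2:ℝ) ^ x := by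
        have h := Real.rpow_le_rpow_of_exponent_ge (by norm_num : (0:ℝ) < 1/2)
          (by norm_num : (1/2:ℝ) ≤ 1) hx1.le
        rwa [Real.rpow_one] at h
      have hWhnn : 0 ≤ ∫ s in (1/2:ℝ)..1, g s :=
        intervalIntegral.integral_nonneg (by norm_num) (fun u _ => hg0 u)
      have h3 : (1/2:ℝ) * (∫ s in (1/2:ℝ)..1, g s) ≤ (1/2:ℝ)^x * ∫ s in (1/2:ℝ)..1, g s :=
        mul_le_mul_of_nonneg_right h2 hWhnn
      rw [eh]
      linarith
    have hkey : c2 * ((1/2) * wHat ω (1/2)) = wHat ω 0 := by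
      rw [hc2_def]
      field_simp
    have hstep : x ^ β * (∫ r in (0:ℝ)..1, r ^ x * ((1-r)^β * g r))
        ≤ ∫ r in (0:ℝ)..1, r ^ x * ((1-r)^β * g r) := by
      nlinarith [hInn, hxβ]
    nlinarith [hstep, hIb, e0, hkey, mul_le_mul_of_nonneg_left hlow2 hc2.le,
      mul_nonneg hKpos.le hMnn]
end

section
/- Let ω be a radial weight. The following statements are equivalent: (i) ω ∈ Ď; (ii) there exist constants C = C(ω) > 0 and β = β(ω) > 0 such that ω̂(s) ≤ C ((1−s)/(1−t))^β ω̂(t) for all 0 ≤ t ≤ s < 1; (iii) there exist k = k(ω) > 1 and C = C(ω) > 0 such that ∫_r^{1−(1−r)/k} ω(s) ds ≥ C ω̂(r) for all 0 ≤ r < 1. -/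
open MeasureTheory Set Filter
open scoped ENNReal

section AuxRadial

variable {ω : ℝ → ℝ}

lemma rw_intervalIntegrable (hω : IsRadialWeight ω) {a b : ℝ}
    (ha : 0 ≤ a) (hab : a ≤ b) (hb : b ≤ 1) : IntervalIntegrable ω volume a b := by
  rw [intervalIntegrable_iff_integrableOn_Ioo_of_le hab]
  exact hω.2.1.mono_set fun x hx => ⟨le_of_lt (lt_of_le_of_lt ha hx.1), lt_of_lt_of_le hx.2 hb⟩

lemma wHat_split (hω : IsRadialWeight ω) {a b : ℝ}
    (ha : 0 ≤ a) (hab : a ≤ b) (hb : b ≤ 1) :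
    wHat ω a = (∫ s in a..b, ω s) + wHat ω b :=
  (intervalIntegral.integral_add_adjacent_intervals
    (rw_intervalIntegrable hω ha hab hb)
    (rw_intervalIntegrable hω (ha.trans hab) hb le_rfl)).symm

lemma rw_integral_nonneg (hω : IsRadialWeight ω) {a b : ℝ}
    (ha : 0 ≤ a) (hab : a ≤ b) (hb : b < 1) : 0 ≤ ∫ s in a..b, ω s :=
  intervalIntegral.integral_nonneg hab fun u hu =>
    hω.1 u ⟨ha.trans hu.1, lt_of_le_of_lt hu.2 hb⟩

lemma wHat_anti (hω : IsRadialWeight ω) {a b : ℝ}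
    (ha : 0 ≤ a) (hab : a ≤ b) (hb : b < 1) : wHat ω b ≤ wHat ω a := by
  have h1 := wHat_split hω ha hab hb.le
  have h2 := rw_integral_nonneg hω ha hab hb
  linarith

lemma dcheck_iter (hω : IsRadialWeight ω) {k C : ℝ} (hk : 1 < k) (hC : 0 < C)
    (h : ∀ r ∈ Set.Ico (0:ℝ) 1, wHat ω r ≥ C * wHat ω (1 - (1 - r) / k)) :
    ∀ n : ℕ, ∀ t ∈ Set.Ico (0:ℝ) 1, C ^ n * wHat ω (1 - (1 - t) / k ^ n) ≤ wHat ω t := by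
  intro n
  induction n with
  | zero => intro t ht; simp
  | succ n ih =>
    intro t ht
    have hk0 : (0:ℝ) < k := by linarith
    have ht1 : 0 < 1 - t := by linarith [ht.2]
    have ht' : (1 - (1 - t) / k) ∈ Set.Ico (0:ℝ) 1 := by
      constructor
      · have : (1 - t) / k ≤ 1 - t := div_le_self ht1.le hk.le
        linarith [ht.1]
      · have : 0 < (1 - t) / k := div_pos ht1 hk0
        linarith
    have hIH := ih (1 - (1 - t) / k) ht'
    have heq : 1 - (1 - (1 - (1 - t) / k)) / k ^ n = 1 - (1 - t) / k ^ (n + 1) := by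
      have h0 : (1 - (1 - (1 - t) / k)) = (1 - t) / k := by ring
      rw [h0, div_div, ← pow_succ']
    rw [heq] at hIH
    calc C ^ (n + 1) * wHat ω (1 - (1 - t) / k ^ (n + 1))
        = C * (C ^ n * wHat ω (1 - (1 - t) / k ^ (n + 1))) := by ring
      _ ≤ C * wHat ω (1 - (1 - t) / k) := mul_le_mul_of_nonneg_left hIH hC.le
      _ ≤ wHat ω t := h t ht

end AuxRadial

/-- **Lemma B (characterizations of the class `Ď`).** For a radial weight `ω`, the
following are equivalent: (i) `ω ∈ Ď`; (ii) there are `C > 0` and `β > 0` with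
`ω̂(s) ≤ C ((1-s)/(1-t))^β ω̂(t)` whenever `0 ≤ t ≤ s < 1`; (iii) there are `k > 1`
and `C > 0` with `∫_r^{1-(1-r)/k} ω(s) ds ≥ C ω̂(r)` for all `0 ≤ r < 1`. -/
theorem Dcheck_characterizations (ω : ℝ → ℝ) (hω : IsRadialWeight ω) :
    List.TFAE
      [Dcheck ω,
        ∃ C > (0:ℝ), ∃ β > (0:ℝ), ∀ t s : ℝ, 0 ≤ t → t ≤ s → s < 1 →
          wHat ω s ≤ C * ((1 - s) / (1 - t)) ^ β * wHat ω t,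
        ∃ k > (1:ℝ), ∃ C > (0:ℝ), ∀ r ∈ Set.Ico (0:ℝ) 1,
          (∫ s in r..(1 - (1 - r) / k), ω s) ≥ C * wHat ω r] := by
  have hwpos := hω.2.2
  tfae_have 1 → 3 := by
    rintro ⟨k, hk, C, hC, h⟩
    have hk0 : (0:ℝ) < k := by linarith
    have hC0 : (0:ℝ) < C := by linarith
    refine ⟨k, hk, 1 - C⁻¹, by
      have : C⁻¹ < 1 := inv_lt_one_of_one_lt₀ hC
      linarith, ?_⟩
    intro r hr
    have hr1 : 0 < 1 - r := by linarith [hr.2]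
    have hρr : r ≤ 1 - (1 - r) / k := by
      have : (1 - r) / k ≤ 1 - r := div_le_self hr1.le hk.le
      linarith
    have hρ1 : 1 - (1 - r) / k < 1 := by
      have : 0 < (1 - r) / k := div_pos hr1 hk0
      linarith
    have hsplit := wHat_split hω hr.1 hρr hρ1.le
    have hmain := h r hr
    have h2 : wHat ω (1 - (1 - r) / k) ≤ C⁻¹ * wHat ω r := by
      have h3 := mul_le_mul_of_nonneg_left hmain (le_of_lt (inv_pos.mpr hC0))
      rwa [← mul_assoc, inv_mul_cancel₀ (ne_of_gt hC0), one_mul] at h3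
    rw [ge_iff_le, sub_mul, one_mul]
    linarith
  tfae_have 3 → 1 := by
    rintro ⟨k, hk, C, hC, h⟩
    have hk0 : (0:ℝ) < k := by linarith
    have key : ∀ r ∈ Set.Ico (0:ℝ) 1,
        wHat ω (1 - (1 - r) / k) ≤ (1 - C) * wHat ω r := by
      intro r hr
      have hr1 : 0 < 1 - r := by linarith [hr.2]
      have hρr : r ≤ 1 - (1 - r) / k := by
        have : (1 - r) / k ≤ 1 - r := div_le_self hr1.le hk.le
        linarith
      have hρ1 : 1 - (1 - r) / k < 1 := by
        have : 0 < (1 - r) / k := div_pos hr1 hk0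
        linarith
      have hsplit := wHat_split hω hr.1 hρr hρ1.le
      have hmain := h r hr
      rw [sub_mul, one_mul]
      linarith
    have hC1 : C < 1 := by
      have h1 := key 0 ⟨le_rfl, one_pos⟩
      have h2 := hwpos 0 ⟨le_rfl, one_pos⟩
      have hρ0 : (0:ℝ) ≤ 1 - (1 - 0) / k := by
        have : (1 - (0:ℝ)) / k ≤ 1 - 0 := div_le_self (by norm_num) hk.le
        linarith
      have hρ1 : 1 - (1 - (0:ℝ)) / k < 1 := by
        have : 0 < (1 - (0:ℝ)) / k := div_pos (by norm_num) hk0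
        linarith
      have h3 := hwpos _ ⟨hρ0, hρ1⟩
      nlinarith
    refine ⟨k, hk, (1 - C)⁻¹, ?_, ?_⟩
    · have h0 : (0:ℝ) < 1 - C := by linarith
      rw [gt_iff_lt, ← one_div, one_lt_div h0]
      linarith
    · intro r hr
      have h1 := key r hr
      have h2 := mul_le_mul_of_nonneg_left h1 (le_of_lt (inv_pos.mpr (by linarith : (0:ℝ) < 1 - C)))
      rw [← mul_assoc, inv_mul_cancel₀ (by linarith : (1:ℝ) - C ≠ 0), one_mul] at h2
      exact h2
  tfae_have 1 → 2 := by
    rintro ⟨k, hk, C, hC, h⟩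
    have hk0 : (0:ℝ) < k := by linarith
    have hC0 : (0:ℝ) < C := by linarith
    set β := Real.logb k C with hβdef
    have hβ : 0 < β := Real.logb_pos hk hC
    have hkβ : k ^ β = C := Real.rpow_logb hk0 (ne_of_gt hk) hC0
    refine ⟨C, hC0, β, hβ, ?_⟩
    intro t s ht hts hs
    have ht1 : t < 1 := lt_of_le_of_lt hts hs
    have hs1 : 0 < 1 - s := by linarith
    have ht1' : 0 < 1 - t := by linarith
    set r := (1 - t) / (1 - s) with hrdef
    have hr1 : 1 ≤ r := by
      rw [hrdef, le_div_iff₀ hs1]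
      linarith
    have hr0 : 0 < r := by linarith
    set n := ⌊Real.logb k r⌋₊ with hndef
    have hlog0 : 0 ≤ Real.logb k r := Real.logb_nonneg hk hr1
    have h1 : k ^ ((n : ℕ) : ℝ) ≤ r := by
      calc k ^ ((n : ℕ) : ℝ) ≤ k ^ Real.logb k r :=
            Real.rpow_le_rpow_of_exponent_le hk.le (Nat.floor_le hlog0)
        _ = r := Real.rpow_logb hk0 (ne_of_gt hk) hr0
    have h2 : r < k ^ (((n : ℕ) : ℝ) + 1) := by
      calc r = k ^ Real.logb k r := (Real.rpow_logb hk0 (ne_of_gt hk) hr0).symm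
        _ < k ^ (((n : ℕ) : ℝ) + 1) :=
            Real.rpow_lt_rpow_of_exponent_lt hk (Nat.lt_floor_add_one _)
    rw [Real.rpow_natCast] at h1
    rw [Real.rpow_add hk0, Real.rpow_one, Real.rpow_natCast] at h2
    have hknpos : (0:ℝ) < k ^ n := pow_pos hk0 n
    have hkn1 : (1:ℝ) ≤ k ^ n := by simpa using pow_le_pow_left₀ (by norm_num : (0:ℝ) ≤ 1) hk.le n
    have hρt : t ≤ 1 - (1 - t) / k ^ n := by
      have : (1 - t) / k ^ n ≤ 1 - t := div_le_self ht1'.le hkn1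
      linarith
    have hρ0 : (0:ℝ) ≤ 1 - (1 - t) / k ^ n := le_trans ht hρt
    have hρs : 1 - (1 - t) / k ^ n ≤ s := by
      have hkr : k ^ n * (1 - s) ≤ 1 - t := by
        rw [hrdef, le_div_iff₀ hs1] at h1
        linarith
      have : 1 - s ≤ (1 - t) / k ^ n := by
        rw [le_div_iff₀ hknpos]
        linarith
      linarith
    have hanti : wHat ω s ≤ wHat ω (1 - (1 - t) / k ^ n) := wHat_anti hω hρ0 hρs hs
    have hiter := dcheck_iter hω hk hC0 h n t ⟨ht, ht1⟩
    have hCn : (0:ℝ) < C ^ n := pow_pos hC0 n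
    have h4 : wHat ω (1 - (1 - t) / k ^ n) ≤ (C ^ n)⁻¹ * wHat ω t := by
      have h5 := mul_le_mul_of_nonneg_left hiter (inv_pos.mpr hCn).le
      rwa [← mul_assoc, inv_mul_cancel₀ hCn.ne', one_mul] at h5
    have e1 : (C : ℝ) ^ n = ((k : ℝ) ^ n) ^ β := by
      rw [← hkβ, ← Real.rpow_natCast (k ^ β) n, ← Real.rpow_natCast k n,
        ← Real.rpow_mul hk0.le, ← Real.rpow_mul hk0.le, mul_comm]
    have hrk : r / k < k ^ n := by
      rw [div_lt_iff₀ hk0]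
      linarith
    have hrk0 : 0 < r / k := div_pos hr0 hk0
    have hp : (r / k) ^ β ≤ ((k : ℝ) ^ n) ^ β :=
      Real.rpow_le_rpow hrk0.le hrk.le hβ.le
    have hp0 : 0 < (r / k) ^ β := Real.rpow_pos_of_pos hrk0 β
    have hinv : (((k : ℝ) ^ n) ^ β)⁻¹ ≤ ((r / k) ^ β)⁻¹ := by
      apply inv_anti₀ hp0 hp
    rw [← e1] at hinv
    have e2 : ((r / k) ^ β)⁻¹ = C * ((1 - s) / (1 - t)) ^ β := by
      rw [← Real.inv_rpow hrk0.le]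
      have e3 : (r / k)⁻¹ = k * ((1 - s) / (1 - t)) := by
        rw [hrdef]
        field_simp
      rw [e3, Real.mul_rpow hk0.le (div_nonneg hs1.le ht1'.le), hkβ]
    rw [e2] at hinv
    have hwt0 : 0 ≤ wHat ω t := (hwpos t ⟨ht, ht1⟩).le
    calc wHat ω s ≤ wHat ω (1 - (1 - t) / k ^ n) := hanti
      _ ≤ (C ^ n)⁻¹ * wHat ω t := h4
      _ ≤ C * ((1 - s) / (1 - t)) ^ β * wHat ω t :=
          mul_le_mul_of_nonneg_right hinv hwt0
  tfae_have 2 → 1 := by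
    rintro ⟨C, hC0, β, hβ, h⟩
    set k := max 2 ((2 * C) ^ β⁻¹) with hkdef
    have hk : (1 : ℝ) < k := lt_of_lt_of_le one_lt_two (le_max_left _ _)
    have hk0 : (0:ℝ) < k := by linarith
    have hk2C : 2 * C ≤ k ^ β := by
      have h1 : (2 * C) ^ β⁻¹ ≤ k := le_max_right _ _
      have h2 : ((2 * C) ^ β⁻¹) ^ β ≤ k ^ β :=
        Real.rpow_le_rpow (Real.rpow_nonneg (by linarith) _) h1 hβ.le
      rwa [Real.rpow_inv_rpow (by linarith) hβ.ne'] at h2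
    refine ⟨k, hk, 2, one_lt_two, ?_⟩
    intro r hr
    have hr1 : 0 < 1 - r := by linarith [hr.2]
    have hρr : r ≤ 1 - (1 - r) / k := by
      have : (1 - r) / k ≤ 1 - r := div_le_self hr1.le hk.le
      linarith
    have hρ1 : 1 - (1 - r) / k < 1 := by
      have : 0 < (1 - r) / k := div_pos hr1 hk0
      linarith
    have hmain := h r (1 - (1 - r) / k) hr.1 hρr hρ1
    have e : (1 - (1 - (1 - r) / k)) / (1 - r) = k⁻¹ := by
      rw [show 1 - (1 - (1 - r) / k) = (1 - r) / k by ring]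
      rw [div_right_comm, div_self hr1.ne', one_div]
    rw [e] at hmain
    have hkβpos : 0 < k ^ β := Real.rpow_pos_of_pos hk0 β
    have hb : C * (k⁻¹) ^ β ≤ 1 / 2 := by
      rw [Real.inv_rpow hk0.le]
      have h5 : (k ^ β)⁻¹ ≤ (2 * C)⁻¹ := inv_anti₀ (by linarith) hk2C
      calc C * (k ^ β)⁻¹ ≤ C * (2 * C)⁻¹ := mul_le_mul_of_nonneg_left h5 hC0.le
        _ = 1 / 2 := by field_simp
    have hw0 : 0 ≤ wHat ω r := (hwpos r hr).le
    have h6 := mul_le_mul_of_nonneg_right hb hw0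
    linarith [hmain, h6]
  tfae_finish
end

section
/- Let ω be a radial weight with ω ∈ Ď and let φ : [0,1) → (0,∞) be decreasing. Then ωφ ∈ Ď. Furthermore, if there exist k > 1 and C > 0 such that C ∫_{1−(1−r)/k}^1 ω(s) ds ≤ ∫_r^{1−(1−r)/k} ω(s) ds for all 0 ≤ r < 1, then C ∫_{1−(1−r)/k}^1 ω(s) φ(s) ds ≤ ∫_r^{1−(1−r)/k} ω(s) φ(s) ds for all 0 ≤ r < 1. -/
open MeasureTheory Set Filter
open scoped ENNReal

/-- Integrability of `ωφ` on subintervals of `[0,1)`. -/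
lemma aux_integrable (ω φ : ℝ → ℝ)
    (hωnn : ∀ s ∈ Set.Ico (0:ℝ) 1, 0 ≤ ω s)
    (hωint : MeasureTheory.IntegrableOn ω (Set.Ico (0:ℝ) 1))
    (hφpos : ∀ r ∈ Set.Ico (0:ℝ) 1, 0 < φ r)
    (hφdec : AntitoneOn φ (Set.Ico (0:ℝ) 1))
    {a b : ℝ} (ha : 0 ≤ a) (hb : b ≤ 1) :
    MeasureTheory.IntegrableOn (fun s => ω s * φ s) (Set.Ioo a b) := by
  have hsub : Set.Ioo a b ⊆ Set.Ico (0:ℝ) 1 := fun x hx => ⟨ha.trans hx.1.le, lt_of_lt_of_le hx.2 hb⟩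
  have hωint' : MeasureTheory.IntegrableOn (fun s => φ 0 * ω s) (Set.Ioo a b) :=
    ((hωint.mono_set hsub).const_mul _)
  have hφm : AEMeasurable φ (volume.restrict (Set.Ioo a b)) :=
    (aemeasurable_restrict_of_antitoneOn measurableSet_Ico hφdec).mono_measure
      (Measure.restrict_mono hsub le_rfl)
  have hmeas : AEStronglyMeasurable (fun s => ω s * φ s) (volume.restrict (Set.Ioo a b)) :=
    ((hωint.mono_set hsub).aestronglyMeasurable.aemeasurable.mul hφm).aestronglyMeasurable
  refine MeasureTheory.Integrable.mono hωint' hmeas ?_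
  filter_upwards [ae_restrict_mem measurableSet_Ioo] with x hx
  have hx01 := hsub hx
  have h1 : 0 ≤ ω x := hωnn x hx01
  have h2 : 0 < φ x := hφpos x hx01
  have h3 : φ x ≤ φ 0 := hφdec ⟨le_rfl, one_pos⟩ hx01 hx01.1
  rw [Real.norm_eq_abs, Real.norm_eq_abs, abs_of_nonneg (mul_nonneg h1 h2.le),
    abs_of_nonneg (mul_nonneg ((hφpos 0 ⟨le_rfl, one_pos⟩).le) h1)]
  calc ω x * φ x ≤ ω x * φ 0 := mul_le_mul_of_nonneg_left h3 h1
    _ = φ 0 * ω x := mul_comm _ _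

/-- key comparison lemmas -/
lemma aux_key (ω φ : ℝ → ℝ)
    (hωnn : ∀ s ∈ Set.Ico (0:ℝ) 1, 0 ≤ ω s)
    (hωint : MeasureTheory.IntegrableOn ω (Set.Ico (0:ℝ) 1))
    (hφpos : ∀ r ∈ Set.Ico (0:ℝ) 1, 0 < φ r)
    (hφdec : AntitoneOn φ (Set.Ico (0:ℝ) 1))
    {r t : ℝ} (hr : 0 ≤ r) (hrt : r ≤ t) (ht : t < 1) :
    (∫ s in t..1, ω s * φ s) ≤ φ t * ∫ s in t..1, ω s ∧
      φ t * (∫ s in r..t, ω s) ≤ ∫ s in r..t, ω s * φ s := by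
  have ht0 : (0:ℝ) ≤ t := hr.trans hrt
  have htmem : t ∈ Set.Ico (0:ℝ) 1 := ⟨ht0, ht⟩
  have hint1 : MeasureTheory.IntegrableOn (fun s => ω s * φ s) (Set.Ioo t 1) :=
    aux_integrable ω φ hωnn hωint hφpos hφdec ht0 le_rfl
  have hint2 : MeasureTheory.IntegrableOn (fun s => ω s * φ s) (Set.Ioo r t) :=
    aux_integrable ω φ hωnn hωint hφpos hφdec hr ht.le
  have hωt1 : MeasureTheory.IntegrableOn ω (Set.Ioo t 1) :=
    hωint.mono_set (fun x hx => ⟨ht0.trans hx.1.le, hx.2⟩)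
  have hωrt : MeasureTheory.IntegrableOn ω (Set.Ioc r t) :=
    hωint.mono_set (fun x hx => ⟨hr.trans hx.1.le, lt_of_le_of_lt hx.2 ht⟩)
  constructor
  · rw [intervalIntegral.integral_of_le ht.le, intervalIntegral.integral_of_le ht.le,
      MeasureTheory.integral_Ioc_eq_integral_Ioo, MeasureTheory.integral_Ioc_eq_integral_Ioo]
    have : (∫ s in Set.Ioo t 1, ω s * φ s) ≤ ∫ s in Set.Ioo t 1, ω s * φ t := by
      refine setIntegral_mono_on hint1 (hωt1.mul_const _) measurableSet_Ioo ?_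
      intro x hx
      have hx01 : x ∈ Set.Ico (0:ℝ) 1 := ⟨ht0.trans hx.1.le, hx.2⟩
      exact mul_le_mul_of_nonneg_left (hφdec htmem hx01 hx.1.le) (hωnn x hx01)
    calc (∫ s in Set.Ioo t 1, ω s * φ s) ≤ ∫ s in Set.Ioo t 1, ω s * φ t := this
      _ = φ t * ∫ s in Set.Ioo t 1, ω s := by
          rw [MeasureTheory.integral_mul_const]; ring
  · rw [intervalIntegral.integral_of_le hrt, intervalIntegral.integral_of_le hrt]
    have hint2' : MeasureTheory.IntegrableOn (fun s => ω s * φ s) (Set.Ioc r t) :=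
      (integrableOn_Ioc_iff_integrableOn_Ioo).2 hint2
    have : (∫ s in Set.Ioc r t, ω s * φ t) ≤ ∫ s in Set.Ioc r t, ω s * φ s := by
      refine setIntegral_mono_on (hωrt.mul_const _) hint2' measurableSet_Ioc ?_
      intro x hx
      have hx01 : x ∈ Set.Ico (0:ℝ) 1 := ⟨hr.trans hx.1.le, lt_of_le_of_lt hx.2 ht⟩
      exact mul_le_mul_of_nonneg_left (hφdec hx01 htmem hx.2) (hωnn x hx01)
    calc φ t * ∫ s in Set.Ioc r t, ω s = ∫ s in Set.Ioc r t, ω s * φ t := by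
          rw [MeasureTheory.integral_mul_const]; ring
      _ ≤ _ := this

lemma aux_split (f : ℝ → ℝ) (hf1 : MeasureTheory.IntegrableOn f (Set.Ioc r t))
    (hf2 : MeasureTheory.IntegrableOn f (Set.Ioo t 1)) (hrt : r ≤ t) (ht : t ≤ 1) :
    (∫ s in r..1, f s) = (∫ s in r..t, f s) + ∫ s in t..1, f s := by
  have h1 : IntervalIntegrable f volume r t :=
    (intervalIntegrable_iff_integrableOn_Ioc_of_le hrt).2 hf1
  have h2 : IntervalIntegrable f volume t 1 :=
    (intervalIntegrable_iff_integrableOn_Ioc_of_le ht).2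
      ((integrableOn_Ioc_iff_integrableOn_Ioo).2 hf2)
  exact (intervalIntegral.integral_add_adjacent_intervals h1 h2).symm


/-- **Lemma (i) on products with decreasing functions.** If `ω ∈ Ď` and
`φ : [0,1) → (0,∞)` is decreasing, then `ωφ ∈ Ď`.  Moreover, if there are `k > 1` and
`C > 0` with `C ∫_{1-(1-r)/k}^1 ω ≤ ∫_r^{1-(1-r)/k} ω` for all `0 ≤ r < 1`, then also
`C ∫_{1-(1-r)/k}^1 ωφ ≤ ∫_r^{1-(1-r)/k} ωφ` for all `0 ≤ r < 1`. -/
theorem Dcheck_mul_decreasing (ω : ℝ → ℝ) (hω : IsRadialWeight ω) (hωD : Dcheck ω)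
    (φ : ℝ → ℝ) (hφpos : ∀ r ∈ Set.Ico (0:ℝ) 1, 0 < φ r)
    (hφdec : AntitoneOn φ (Set.Ico (0:ℝ) 1)) :
    Dcheck (fun r => ω r * φ r) ∧
      ∀ k > (1:ℝ), ∀ C > (0:ℝ),
        (∀ r ∈ Set.Ico (0:ℝ) 1,
            C * ∫ s in (1 - (1 - r) / k)..1, ω s ≤ ∫ s in r..(1 - (1 - r) / k), ω s) →
        ∀ r ∈ Set.Ico (0:ℝ) 1,
          C * ∫ s in (1 - (1 - r) / k)..1, ω s * φ s ≤
            ∫ s in r..(1 - (1 - r) / k), ω s * φ s := by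
  obtain ⟨hωnn, hωint, hωpos⟩ := hω
  have main : ∀ k > (1:ℝ), ∀ r ∈ Set.Ico (0:ℝ) 1,
      (0 ≤ r ∧ r ≤ 1 - (1 - r)/k ∧ 1 - (1-r)/k < 1) := by
    intro k hk r hr
    have h1r : 0 < 1 - r := by linarith [hr.2]
    have hk0 : 0 < k := lt_trans one_pos hk
    have hdiv : 0 < (1 - r)/k := div_pos h1r hk0
    have hlt : (1 - r)/k < 1 - r := div_lt_self h1r hk
    exact ⟨hr.1, by linarith, by linarith⟩
  constructor
  · obtain ⟨k, hk, C, hC, hD⟩ := hωD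
    refine ⟨k, hk, C, hC, ?_⟩
    intro r hr
    obtain ⟨hr0, hrt, ht1⟩ := main k hk r hr
    set t := 1 - (1 - r)/k with htdef
    have ht0 : (0:ℝ) ≤ t := hr0.trans hrt
    obtain ⟨key1, key2⟩ := aux_key ω φ hωnn hωint hφpos hφdec hr0 hrt ht1
    have hφt : 0 ≤ φ t := (hφpos t ⟨ht0, ht1⟩).le
    have hint2 : MeasureTheory.IntegrableOn (fun s => ω s * φ s) (Set.Ioc r t) :=
      (integrableOn_Ioc_iff_integrableOn_Ioo).2
        (aux_integrable ω φ hωnn hωint hφpos hφdec hr0 ht1.le)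
    have hint1 : MeasureTheory.IntegrableOn (fun s => ω s * φ s) (Set.Ioo t 1) :=
      aux_integrable ω φ hωnn hωint hφpos hφdec ht0 le_rfl
    have hωrt : MeasureTheory.IntegrableOn ω (Set.Ioc r t) :=
      hωint.mono_set (fun x hx => ⟨hr0.trans hx.1.le, lt_of_le_of_lt hx.2 ht1⟩)
    have hωt1 : MeasureTheory.IntegrableOn ω (Set.Ioo t 1) :=
      hωint.mono_set (fun x hx => ⟨ht0.trans hx.1.le, hx.2⟩)
    have hsplitω : wHat ω r = (∫ s in r..t, ω s) + ∫ s in t..1, ω s :=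
      aux_split ω hωrt hωt1 hrt ht1.le
    have hsplitωφ : wHat (fun r => ω r * φ r) r
        = (∫ s in r..t, ω s * φ s) + ∫ s in t..1, ω s * φ s :=
      aux_split (fun s => ω s * φ s) hint2 hint1 hrt ht1.le
    have hDr := hD r hr
    rw [← htdef] at hDr
    have hwt : wHat ω t = ∫ s in t..1, ω s := rfl
    have hwft : wHat (fun r => ω r * φ r) t = ∫ s in t..1, ω s * φ s := rfl
    rw [ge_iff_le, hwft, hsplitωφ]
    rw [ge_iff_le, hwt, hsplitω] at hDr
    nlinarith [mul_le_mul_of_nonneg_left (show C * (∫ s in t..1, ω s) - (∫ s in t..1, ω s) ≤ ∫ s in r..t, ω s by linarith) hφt,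
      mul_le_mul_of_nonneg_left key1 (show (0:ℝ) ≤ C - 1 by linarith), key2]
  · intro k hk C hC h r hr
    obtain ⟨hr0, hrt, ht1⟩ := main k hk r hr
    set t := 1 - (1 - r)/k with htdef
    have ht0 : (0:ℝ) ≤ t := hr0.trans hrt
    obtain ⟨key1, key2⟩ := aux_key ω φ hωnn hωint hφpos hφdec hr0 hrt ht1
    have hφt : 0 ≤ φ t := (hφpos t ⟨ht0, ht1⟩).le
    have hh := h r hr
    rw [← htdef] at hh
    nlinarith [mul_le_mul_of_nonneg_left key1 hC.le, mul_le_mul_of_nonneg_left hh hφt, key2]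
end

section
/- Let μ be a radial weight with μ ∈ D̂, let γ > 0 and let k ∈ ℕ with k ≥ 2. Then there exist constants C₁, C₂ > 0 such that C₁ ∫_0^r dt/((1−t) μ̂(t)^γ) ≤ Σ_{n=0}^∞ r^{k^n}/μ_{k^n}^γ ≤ C₂ ∫_0^r dt/((1−t) μ̂(t)^γ) for all 0 ≤ r < 1. -/
open MeasureTheory Set Filter
open scoped ENNReal

namespace AuxSRM

variable {μ : ℝ → ℝ}

lemma muInt (hμ : IsRadialWeight μ) {a b : ℝ} (ha : 0 ≤ a) (hab : a ≤ b) (hb : b ≤ 1) :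
    IntervalIntegrable μ volume a b := by
  rw [intervalIntegrable_iff_integrableOn_Ioc_of_le hab]
  have hsub : Ioc a b ≤ᵐ[volume] (Ico (0:ℝ) 1 : Set ℝ) := by
    have : Ioc a b \ Ico (0:ℝ) 1 ⊆ {(1:ℝ)} := by
      intro x hx
      rcases hx with ⟨⟨h1, h2⟩, h3⟩
      simp only [mem_Ico, not_and, not_lt] at h3
      have hx0 : 0 ≤ x := le_trans ha h1.le
      have := h3 hx0
      simp [le_antisymm (h2.trans hb) this]
    exact (ae_le_set.2 (measure_mono_null this (by simp)))
  exact (hμ.2.1).mono_set_ae hsub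

lemma mu_nonneg_ae (hμ : IsRadialWeight μ) {a b : ℝ} (ha : 0 ≤ a) (hb : b ≤ 1) :
    0 ≤ᵐ[volume.restrict (Icc a b)] μ := by
  have h : Icc a b \ {x | 0 ≤ μ x} ⊆ {(1:ℝ)} := by
    intro x hx
    rcases hx with ⟨⟨h1, h2⟩, h3⟩
    simp only [mem_setOf_eq] at h3
    by_contra hne
    exact h3 (hμ.1 x ⟨le_trans ha h1, lt_of_le_of_ne (h2.trans hb) hne⟩)
  refine (ae_restrict_iff' measurableSet_Icc).2 ?_
  have : volume ({x : ℝ | ¬ (x ∈ Icc a b → 0 ≤ μ x)}) = 0 := by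
    refine measure_mono_null ?_ (Real.volume_singleton (a := (1:ℝ)))
    intro x hx
    simp only [mem_setOf_eq, Classical.not_imp] at hx
    exact h ⟨hx.1, hx.2⟩
  exact this

lemma int_mu_nonneg (hμ : IsRadialWeight μ) {a b : ℝ} (ha : 0 ≤ a) (hab : a ≤ b) (hb : b ≤ 1) :
    0 ≤ ∫ s in a..b, μ s :=
  intervalIntegral.integral_nonneg_of_ae_restrict hab (mu_nonneg_ae hμ ha hb)

lemma wHat_split (hμ : IsRadialWeight μ) {a b : ℝ} (ha : 0 ≤ a) (hab : a ≤ b) (hb : b ≤ 1) :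
    wHat μ a = (∫ s in a..b, μ s) + wHat μ b := by
  rw [wHat, wHat, ← intervalIntegral.integral_add_adjacent_intervals (muInt hμ ha hab hb)
    (muInt hμ (ha.trans hab) hb le_rfl)]

lemma wHat_anti (hμ : IsRadialWeight μ) {a b : ℝ} (ha : 0 ≤ a) (hab : a ≤ b) (hb : b ≤ 1) :
    wHat μ b ≤ wHat μ a := by
  rw [wHat_split hμ ha hab hb]
  linarith [int_mu_nonneg hμ ha hab hb]


section Dhat2
variable {C : ℝ}

lemma wHat_pos (hμ : IsRadialWeight μ) {r : ℝ} (h0 : 0 ≤ r) (h1 : r < 1) : 0 < wHat μ r :=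
  hμ.2.2 r ⟨h0, h1⟩

lemma dhat_iter (hμ : IsRadialWeight μ)
    (hC : ∀ r ∈ Set.Ico (0:ℝ) 1, wHat μ r ≤ C * wHat μ ((1 + r) / 2))
    {r : ℝ} (h0 : 0 ≤ r) (h1 : r < 1) (m : ℕ) :
    wHat μ r ≤ C ^ m * wHat μ (1 - (1 - r) / 2 ^ m) := by
  induction m with
  | zero => simp
  | succ m ih =>
    set s := 1 - (1 - r) / 2 ^ m with hs
    have h2m : (0:ℝ) < 2 ^ m := by positivity
    have h2m1 : (1:ℝ) ≤ 2 ^ m := one_le_pow₀ (by norm_num)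
    have hs0 : 0 ≤ s := by
      have : (1 - r) / 2 ^ m ≤ 1 := by
        rw [div_le_one h2m]; linarith
      simp only [hs]; linarith
    have hs1 : s < 1 := by
      have : 0 < (1 - r) / 2 ^ m := div_pos (by linarith) h2m
      simp only [hs]; linarith
    have hC0 : 0 < C := by
      have h1' := hμ.2.2 r ⟨h0, h1⟩
      have h2' := hμ.2.2 ((1 + r)/2) ⟨by linarith, by linarith⟩
      nlinarith [hC r ⟨h0, h1⟩]
    have key : wHat μ s ≤ C * wHat μ (1 - (1 - r) / 2 ^ (m + 1)) := by
      have := hC s ⟨hs0, hs1⟩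
      have heq : (1 + s) / 2 = 1 - (1 - r) / 2 ^ (m + 1) := by
        rw [hs]; ring
      rwa [heq] at this
    calc wHat μ r ≤ C ^ m * wHat μ s := ih
      _ ≤ C ^ m * (C * wHat μ (1 - (1 - r) / 2 ^ (m + 1))) := by
          exact mul_le_mul_of_nonneg_left key (by positivity)
      _ = C ^ (m + 1) * wHat μ (1 - (1 - r) / 2 ^ (m + 1)) := by ring

lemma dhat_kstep (hμ : IsRadialWeight μ)
    (hC : ∀ r ∈ Set.Ico (0:ℝ) 1, wHat μ r ≤ C * wHat μ ((1 + r) / 2))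
    (hC1 : 1 < C) {k : ℕ} (hk : 2 ≤ k)
    {r : ℝ} (h0 : 0 ≤ r) (h1 : r < 1) :
    wHat μ r ≤ C ^ k * wHat μ (1 - (1 - r) / k) := by
  have hkR : (2:ℝ) ≤ (k:ℝ) := by exact_mod_cast hk
  have hk2 : (k:ℝ) ≤ 2 ^ k := by exact_mod_cast (Nat.lt_two_pow_self (n := k)).le
  have h2k : (0:ℝ) < 2 ^ k := by positivity
  have hle : 1 - (1 - r) / k ≤ 1 - (1 - r) / 2 ^ k := by
    have : (1 - r) / 2 ^ k ≤ (1 - r) / k := by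
      apply div_le_div_of_nonneg_left (by linarith) (by linarith) hk2
    linarith
  have h0' : 0 ≤ 1 - (1 - r) / k := by
    have : (1 - r) / k ≤ 1 := by
      rw [div_le_one (by linarith)]; linarith
    linarith
  calc wHat μ r ≤ C ^ k * wHat μ (1 - (1 - r) / 2 ^ k) := dhat_iter hμ hC h0 h1 k
    _ ≤ C ^ k * wHat μ (1 - (1 - r) / k) := by
        apply mul_le_mul_of_nonneg_left _ (by positivity)
        apply wHat_anti hμ h0' hle
        have : 0 < (1 - r) / 2 ^ k := div_pos (by linarith) h2k
        linarith

end Dhat2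

noncomputable def kr (k n : ℕ) : ℝ := 1 - ((k:ℝ) ^ n)⁻¹

section Rho
variable {k : ℕ} (hk : 2 ≤ k)
include hk

lemma kR_two : (2:ℝ) ≤ (k:ℝ) := by exact_mod_cast hk
lemma kpow_pos (n : ℕ) : (0:ℝ) < (k:ℝ) ^ n := by positivity
lemma kpow_one_le (n : ℕ) : (1:ℝ) ≤ (k:ℝ) ^ n := one_le_pow₀ (by linarith [kR_two hk])

omit hk in lemma kr_zero : kr k 0 = 0 := by simp [kr]
lemma kr_nonneg (n : ℕ) : 0 ≤ kr k n := by
  have := kpow_one_le hk n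
  have h := kpow_pos hk n
  simp only [kr, sub_nonneg]
  rw [inv_le_one_iff₀]; right; exact this
lemma kr_lt_one (n : ℕ) : kr k n < 1 := by
  have h := kpow_pos hk n
  simp only [kr]
  have : 0 < ((k:ℝ) ^ n)⁻¹ := by positivity
  linarith
omit hk in lemma one_sub_kr (n : ℕ) : 1 - kr k n = ((k:ℝ) ^ n)⁻¹ := by simp [kr]
lemma kr_succ (n : ℕ) : 1 - (1 - kr k n) / k = kr k (n + 1) := by
  have h := kpow_pos hk n
  have hk0 : (0:ℝ) < k := by linarith [kR_two hk]
  simp only [kr]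
  field_simp
  ring
lemma kr_mono {n m : ℕ} (hnm : n ≤ m) : kr k n ≤ kr k m := by
  simp only [kr, sub_le_sub_iff_left]
  apply inv_anti₀ (kpow_pos hk n)
  exact pow_le_pow_right₀ (by linarith [kR_two hk]) hnm
lemma kr_lt_succ (n : ℕ) : kr k n < kr k (n+1) := by
  simp only [kr, sub_lt_sub_iff_left]
  apply inv_strictAnti₀ (kpow_pos hk n)
  apply pow_lt_pow_right₀ (by linarith [kR_two hk]) (by omega)

end Rho

lemma inv_le_mul_inv' {a b c : ℝ} (ha : 0 < a) (hc : 0 < c) (h : a ≤ b * c) :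
    c⁻¹ ≤ b * a⁻¹ := by
  have ha' : (0:ℝ) < a⁻¹ := by positivity
  have hc' : (0:ℝ) < c⁻¹ := by positivity
  have h1 : a * a⁻¹ = 1 := mul_inv_cancel₀ ha.ne'
  have h2 : c * c⁻¹ = 1 := mul_inv_cancel₀ hc.ne'
  nlinarith [mul_le_mul_of_nonneg_right h (le_of_lt (mul_pos ha' hc'))]

section Main
variable {C : ℝ} {k : ℕ} {γ : ℝ}
variable (hμ : IsRadialWeight μ)
  (hC : ∀ r ∈ Set.Ico (0:ℝ) 1, wHat μ r ≤ C * wHat μ ((1 + r) / 2))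
  (hC1 : 1 < C) (hk : 2 ≤ k) (hγ : 0 < γ)
include hμ hC hC1 hk

lemma wk_step (n : ℕ) : wHat μ (kr k n) ≤ C ^ k * wHat μ (kr k (n + 1)) := by
  have := dhat_kstep hμ hC hC1 hk (kr_nonneg hk n) (kr_lt_one hk n)
  rwa [kr_succ hk n] at this

lemma wk_iter (n m : ℕ) : wHat μ (kr k n) ≤ (C ^ k) ^ m * wHat μ (kr k (n + m)) := by
  induction m with
  | zero => simp
  | succ m ih =>
    calc wHat μ (kr k n) ≤ (C ^ k) ^ m * wHat μ (kr k (n + m)) := ih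
      _ ≤ (C ^ k) ^ m * (C ^ k * wHat μ (kr k (n + m + 1))) := by
          refine mul_le_mul_of_nonneg_left (wk_step hμ hC hC1 hk (n + m)) (by positivity)
      _ = (C ^ k) ^ (m + 1) * wHat μ (kr k (n + (m + 1))) := by
          rw [← add_assoc]; ring

include hγ

lemma winv_iter (n m : ℕ) :
    (wHat μ (kr k (n + m)) ^ γ)⁻¹ ≤ ((C ^ k) ^ γ) ^ m * (wHat μ (kr k n) ^ γ)⁻¹ := by
  have hWn := wHat_pos hμ (kr_nonneg hk n) (kr_lt_one hk n)
  have hWm := wHat_pos hμ (kr_nonneg hk (n + m)) (kr_lt_one hk (n + m))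
  have hCk : (0:ℝ) < C ^ k := by positivity
  have h := wk_iter hμ hC hC1 hk n m
  have hrp : wHat μ (kr k n) ^ γ ≤ ((C ^ k) ^ γ) ^ m * wHat μ (kr k (n + m)) ^ γ := by
    calc wHat μ (kr k n) ^ γ ≤ ((C ^ k) ^ m * wHat μ (kr k (n + m))) ^ γ :=
          Real.rpow_le_rpow hWn.le h hγ.le
      _ = ((C ^ k) ^ m) ^ γ * wHat μ (kr k (n + m)) ^ γ :=
          Real.mul_rpow (by positivity) hWm.le
      _ = ((C ^ k) ^ γ) ^ m * wHat μ (kr k (n + m)) ^ γ := by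
          rw [← Real.rpow_natCast (C ^ k) m, ← Real.rpow_natCast ((C ^ k) ^ γ) m,
            ← Real.rpow_mul hCk.le, ← Real.rpow_mul hCk.le, mul_comm γ (m:ℝ)]
  exact inv_le_mul_inv' (Real.rpow_pos_of_pos hWn γ) (Real.rpow_pos_of_pos hWm γ) hrp


omit hC hC1 hk in
lemma g_prod_pos {t : ℝ} (h0 : 0 ≤ t) (h1 : t < 1) :
    0 < (1 - t) * wHat μ t ^ γ := by
  have := wHat_pos hμ h0 h1
  have : (0:ℝ) < wHat μ t ^ γ := Real.rpow_pos_of_pos this γ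
  nlinarith

omit hC hC1 hk in
lemma g_anti {t₁ t₂ : ℝ} (h0 : 0 ≤ t₁) (h12 : t₁ ≤ t₂) (h1 : t₂ < 1) :
    (1 - t₂) * wHat μ t₂ ^ γ ≤ (1 - t₁) * wHat μ t₁ ^ γ := by
  have hW2 := wHat_pos hμ (h0.trans h12) h1
  have hle : wHat μ t₂ ≤ wHat μ t₁ := wHat_anti hμ h0 h12 h1.le
  have h2 : wHat μ t₂ ^ γ ≤ wHat μ t₁ ^ γ := Real.rpow_le_rpow hW2.le hle hγ.le
  have h3 : (0:ℝ) < wHat μ t₂ ^ γ := Real.rpow_pos_of_pos hW2 γ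
  nlinarith

omit hC hC1 hk in
lemma g_mono_on {b : ℝ} (hb0 : 0 ≤ b) (hb1 : b < 1) :
    MonotoneOn (fun t => ((1 - t) * wHat μ t ^ γ)⁻¹) (Icc 0 b) := by
  intro t₁ h₁ t₂ h₂ h12
  have h1' : (0:ℝ) ≤ t₁ := h₁.1
  have h2' : t₂ < 1 := lt_of_le_of_lt h₂.2 hb1
  exact inv_anti₀ (g_prod_pos hμ hγ (h1'.trans h12) h2') (g_anti hμ hγ h1' h12 h2')

omit hC hC1 hk in
lemma g_intble {a b : ℝ} (ha : 0 ≤ a) (hab : a ≤ b) (hb : b < 1) :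
    IntervalIntegrable (fun t => ((1 - t) * wHat μ t ^ γ)⁻¹) volume a b := by
  apply MonotoneOn.intervalIntegrable
  have : Set.uIcc a b ⊆ Icc 0 b := by
    rw [uIcc_of_le hab]
    exact Icc_subset_Icc ha le_rfl
  exact (g_mono_on hμ hγ (ha.trans hab) hb).mono this

omit hC hC1 hk in
lemma int_g_nonneg {a b : ℝ} (ha : 0 ≤ a) (hab : a ≤ b) (hb : b < 1) :
    0 ≤ ∫ t in a..b, ((1 - t) * wHat μ t ^ γ)⁻¹ := by
  apply intervalIntegral.integral_nonneg hab
  intro u hu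
  have := g_prod_pos hμ hγ (ha.trans hu.1) (lt_of_le_of_lt hu.2 hb)
  positivity

omit hC hC1 in
lemma int_g_lb (j : ℕ) :
    (1/2) * (wHat μ (kr k j) ^ γ)⁻¹ ≤
      ∫ t in kr k j..kr k (j+1), ((1 - t) * wHat μ t ^ γ)⁻¹ := by
  have hj0 := kr_nonneg hk j
  have hj1 := kr_lt_one hk j
  have hj1' := kr_lt_one hk (j+1)
  have hle := (kr_lt_succ hk j).le
  have hWj := wHat_pos hμ hj0 hj1
  have hkpos := kpow_pos hk j
  have hkR := kR_two hk
  have hconst : ∀ t ∈ Icc (kr k j) (kr k (j+1)),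
      ((1 - kr k j) * wHat μ (kr k j) ^ γ)⁻¹ ≤ ((1 - t) * wHat μ t ^ γ)⁻¹ := by
    intro t ht
    exact inv_anti₀ (g_prod_pos hμ hγ (hj0.trans ht.1) (lt_of_le_of_lt ht.2 hj1'))
      (g_anti hμ hγ hj0 ht.1 (lt_of_le_of_lt ht.2 hj1'))
  have hint := intervalIntegral.integral_mono_on hle intervalIntegrable_const
    (g_intble hμ hγ hj0 hle hj1') hconst
  rw [intervalIntegral.integral_const, smul_eq_mul] at hint
  refine le_trans ?_ hint
  have hlen : kr k (j+1) - kr k j = ((k:ℝ) ^ j)⁻¹ * (1 - (k:ℝ)⁻¹) := by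
    simp only [kr]
    rw [pow_succ]
    field_simp
    ring
  rw [hlen, one_sub_kr, mul_inv, inv_inv]
  have h1 : (1:ℝ)/2 ≤ 1 - (k:ℝ)⁻¹ := by
    have : (k:ℝ)⁻¹ ≤ 1/2 := by
      rw [inv_le_comm₀ (by linarith) (by norm_num)]
      linarith
    linarith
  have hWγ : (0:ℝ) < (wHat μ (kr k j) ^ γ)⁻¹ := by
    have := Real.rpow_pos_of_pos hWj γ; positivity
  have hrw : ((k:ℝ) ^ j)⁻¹ * (1 - (k:ℝ)⁻¹) * ((k:ℝ) ^ j * (wHat μ (kr k j) ^ γ)⁻¹)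
      = (1 - (k:ℝ)⁻¹) * (wHat μ (kr k j) ^ γ)⁻¹ := by
    field_simp
    try ring
  rw [hrw]
  nlinarith

omit hC hC1 in
lemma int_g_ub (j : ℕ) :
    (∫ t in kr k j..kr k (j+1), ((1 - t) * wHat μ t ^ γ)⁻¹) ≤
      (k:ℝ) * (wHat μ (kr k (j+1)) ^ γ)⁻¹ := by
  have hj0 := kr_nonneg hk j
  have hj1' := kr_lt_one hk (j+1)
  have hle := (kr_lt_succ hk j).le
  have hWj1 := wHat_pos hμ (kr_nonneg hk (j+1)) hj1'
  have hkpos := kpow_pos hk j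
  have hkR := kR_two hk
  have hconst : ∀ t ∈ Icc (kr k j) (kr k (j+1)),
      ((1 - t) * wHat μ t ^ γ)⁻¹ ≤ ((1 - kr k (j+1)) * wHat μ (kr k (j+1)) ^ γ)⁻¹ := by
    intro t ht
    exact inv_anti₀ (g_prod_pos hμ hγ (kr_nonneg hk (j+1)) hj1')
      (g_anti hμ hγ (hj0.trans ht.1) ht.2 hj1')
  have hint := intervalIntegral.integral_mono_on hle
    (g_intble hμ hγ hj0 hle hj1') intervalIntegrable_const hconst
  rw [intervalIntegral.integral_const, smul_eq_mul] at hint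
  refine hint.trans ?_
  have hlen : kr k (j+1) - kr k j = ((k:ℝ) ^ j)⁻¹ * (1 - (k:ℝ)⁻¹) := by
    simp only [kr]
    rw [pow_succ]
    field_simp
    ring
  rw [hlen, one_sub_kr, mul_inv, inv_inv]
  have hWγ : (0:ℝ) < wHat μ (kr k (j+1)) ^ γ := Real.rpow_pos_of_pos hWj1 γ
  have hrw : ((k:ℝ) ^ j)⁻¹ * (1 - (k:ℝ)⁻¹) * ((k:ℝ) ^ (j+1) * (wHat μ (kr k (j+1)) ^ γ)⁻¹)
      = (1 - (k:ℝ)⁻¹) * (k:ℝ) * (wHat μ (kr k (j+1)) ^ γ)⁻¹ := by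
    rw [pow_succ]
    field_simp
    try ring
  rw [hrw]
  have h0inv : (0:ℝ) < (wHat μ (kr k (j+1)) ^ γ)⁻¹ := by positivity
  have h2 : (0:ℝ) ≤ (k:ℝ)⁻¹ * ((k:ℝ) * (wHat μ (kr k (j+1)) ^ γ)⁻¹) := by positivity
  nlinarith [h2]

omit hC hC1 in
lemma int_g_chain (N : ℕ) :
    ∫ t in (0:ℝ)..kr k N, ((1 - t) * wHat μ t ^ γ)⁻¹ =
      ∑ j ∈ Finset.range N, ∫ t in kr k j..kr k (j+1), ((1 - t) * wHat μ t ^ γ)⁻¹ := by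
  induction N with
  | zero => simp [kr_zero]
  | succ N ih =>
    rw [Finset.sum_range_succ, ← ih]
    rw [← intervalIntegral.integral_add_adjacent_intervals
      (a := (0:ℝ)) (b := kr k N) (c := kr k (N+1))
      (g_intble hμ hγ le_rfl (kr_nonneg hk N) (kr_lt_one hk N))
      (g_intble hμ hγ (kr_nonneg hk N) (kr_lt_succ hk N).le (kr_lt_one hk (N+1)))]


omit hμ hC hC1 hγ in
lemma summable_geo_exp {a c : ℝ} (ha : 0 < a) (hc : 0 < c) :
    Summable (fun i : ℕ => a ^ i * Real.exp (-(c * (k:ℝ) ^ i))) := by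
  have hkR := kR_two hk
  apply summable_of_ratio_norm_eventually_le (r := 1/2) (by norm_num)
  have htend : Tendsto (fun i : ℕ => c * (k:ℝ) ^ i) atTop atTop := by
    exact (tendsto_pow_atTop_atTop_of_one_lt (by linarith)).const_mul_atTop hc
  filter_upwards [htend.eventually_ge_atTop (Real.log (2 * a))] with i hi
  have hpos1 : (0:ℝ) < a ^ (i+1) * Real.exp (-(c * (k:ℝ) ^ (i+1))) := by positivity
  have hpos0 : (0:ℝ) < a ^ i * Real.exp (-(c * (k:ℝ) ^ i)) := by positivity
  rw [Real.norm_eq_abs, Real.norm_eq_abs, abs_of_pos hpos1, abs_of_pos hpos0]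
  have hkey : a * Real.exp (-(c * (k:ℝ) ^ (i+1)) + c * (k:ℝ) ^ i) ≤ 1/2 := by
    have h1 : c * (k:ℝ) ^ i ≤ c * (k:ℝ) ^ (i+1) - c * (k:ℝ) ^ i := by
      have : (2:ℝ) * ((k:ℝ) ^ i) ≤ (k:ℝ) ^ (i+1) := by
        rw [pow_succ]
        nlinarith [kpow_pos hk i]
      nlinarith
    have h2 : Real.log (2 * a) ≤ c * (k:ℝ) ^ (i+1) - c * (k:ℝ) ^ i := le_trans hi h1
    have h3 : Real.exp (-(c * (k:ℝ) ^ (i+1)) + c * (k:ℝ) ^ i) ≤ (2 * a)⁻¹ := by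
      rw [← Real.exp_log (x := (2*a)⁻¹) (by positivity), Real.exp_le_exp,
        Real.log_inv]
      linarith
    calc a * Real.exp (-(c * (k:ℝ) ^ (i+1)) + c * (k:ℝ) ^ i) ≤ a * (2 * a)⁻¹ :=
          mul_le_mul_of_nonneg_left h3 ha.le
      _ = 1/2 := by field_simp
  calc a ^ (i+1) * Real.exp (-(c * (k:ℝ) ^ (i+1)))
      = (a ^ i * Real.exp (-(c * (k:ℝ) ^ i))) *
          (a * Real.exp (-(c * (k:ℝ) ^ (i+1)) + c * (k:ℝ) ^ i)) := by
        have hE : Real.exp (-(c * (k:ℝ) ^ (i+1))) =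
            Real.exp (-(c * (k:ℝ) ^ i)) * Real.exp (-(c * (k:ℝ) ^ (i+1)) + c * (k:ℝ) ^ i) := by
          rw [← Real.exp_add]
          ring_nf
        rw [hE]
        ring
    _ ≤ (a ^ i * Real.exp (-(c * (k:ℝ) ^ i))) * (1/2) :=
        mul_le_mul_of_nonneg_left hkey hpos0.le
    _ = 1/2 * (a ^ i * Real.exp (-(c * (k:ℝ) ^ i))) := by ring

omit hC hC1 hγ in
lemma momInt {M : ℕ} {a b : ℝ} (ha : 0 ≤ a) (hab : a ≤ b) (hb : b ≤ 1) :
    IntervalIntegrable (fun s => s ^ M * μ s) volume a b := by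
  rw [intervalIntegrable_iff_integrableOn_Ioc_of_le hab]
  have base : IntegrableOn μ (Ioc a b) volume := by
    have := muInt hμ ha hab hb
    rwa [intervalIntegrable_iff_integrableOn_Ioc_of_le hab] at this
  refine Integrable.mono base ?_ ?_
  · exact ((continuous_pow M).aestronglyMeasurable).mul base.aestronglyMeasurable
  · filter_upwards [ae_restrict_mem measurableSet_Ioc] with s hs
    rw [norm_mul]
    have h1 : ‖s ^ M‖ ≤ 1 := by
      rw [Real.norm_eq_abs, abs_pow]
      apply pow_le_one₀ (abs_nonneg s)
      rw [abs_le]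
      constructor
      · linarith [hs.1, ha]
      · linarith [hs.2, hb]
    calc ‖s ^ M‖ * ‖μ s‖ ≤ 1 * ‖μ s‖ :=
        mul_le_mul_of_nonneg_right h1 (norm_nonneg _)
      _ = ‖μ s‖ := one_mul _

omit hC hC1 hγ in
lemma mom_piece_nonneg {M : ℕ} {a b : ℝ} (ha : 0 ≤ a) (hab : a ≤ b) (hb : b ≤ 1) :
    0 ≤ ∫ s in a..b, s ^ M * μ s := by
  apply intervalIntegral.integral_nonneg_of_ae_restrict hab
  filter_upwards [mu_nonneg_ae hμ ha hb, ae_restrict_mem measurableSet_Icc] with s h1 h2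
  exact mul_nonneg (pow_nonneg (le_trans ha h2.1) M) h1

omit hC hC1 hγ in
lemma mom_chain {M : ℕ} (n : ℕ) :
    ∫ s in (0:ℝ)..1, s ^ M * μ s =
      (∑ j ∈ Finset.range n, ∫ s in kr k j..kr k (j+1), s ^ M * μ s) +
        ∫ s in kr k n..1, s ^ M * μ s := by
  induction n with
  | zero => simp [kr_zero]
  | succ n ih =>
    rw [ih, Finset.sum_range_succ]
    rw [← intervalIntegral.integral_add_adjacent_intervals
      (a := kr k n) (b := kr k (n+1)) (c := (1:ℝ))
      (momInt hμ hk (kr_nonneg hk n) (kr_lt_succ hk n).le (kr_lt_one hk (n+1)).le)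
      (momInt hμ hk (kr_nonneg hk (n+1)) (kr_lt_one hk (n+1)).le le_rfl)]
    ring

omit hC hC1 hγ in
lemma mom_piece_ub {M : ℕ} (j : ℕ) :
    (∫ s in kr k j..kr k (j+1), s ^ M * μ s) ≤ kr k (j+1) ^ M * wHat μ (kr k j) := by
  have hj0 := kr_nonneg hk j
  have hle := (kr_lt_succ hk j).le
  have hj1' := (kr_lt_one hk (j+1)).le
  have step1 : (∫ s in kr k j..kr k (j+1), s ^ M * μ s) ≤
      ∫ s in kr k j..kr k (j+1), kr k (j+1) ^ M * μ s := by
    refine intervalIntegral.integral_mono_ae_restrict hle (momInt hμ hk hj0 hle hj1')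
      ((muInt hμ hj0 hle hj1').const_mul _) ?_
    filter_upwards [mu_nonneg_ae hμ hj0 hj1', ae_restrict_mem measurableSet_Icc] with s h1 h2
    exact mul_le_mul_of_nonneg_right (pow_le_pow_left₀ (le_trans hj0 h2.1) h2.2 M) h1
  have step2 : (∫ s in kr k j..kr k (j+1), kr k (j+1) ^ M * μ s) =
      kr k (j+1) ^ M * ∫ s in kr k j..kr k (j+1), μ s :=
    intervalIntegral.integral_const_mul _ _
  have step3 : (∫ s in kr k j..kr k (j+1), μ s) ≤ wHat μ (kr k j) := by
    have := wHat_split hμ hj0 hle hj1'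
    have hW := wHat_pos hμ (kr_nonneg hk (j+1)) (kr_lt_one hk (j+1))
    linarith
  calc (∫ s in kr k j..kr k (j+1), s ^ M * μ s)
      ≤ kr k (j+1) ^ M * ∫ s in kr k j..kr k (j+1), μ s := by rw [← step2]; exact step1
    _ ≤ kr k (j+1) ^ M * wHat μ (kr k j) := by
        refine mul_le_mul_of_nonneg_left step3 (pow_nonneg (kr_nonneg hk (j+1)) M)

omit hC hC1 hγ in
lemma mom_tail_ub {M : ℕ} (n : ℕ) :
    (∫ s in kr k n..1, s ^ M * μ s) ≤ wHat μ (kr k n) := by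
  have hj0 := kr_nonneg hk n
  have hle := (kr_lt_one hk n).le
  have step1 : (∫ s in kr k n..1, s ^ M * μ s) ≤ ∫ s in kr k n..1, μ s := by
    refine intervalIntegral.integral_mono_ae_restrict hle (momInt hμ hk hj0 hle le_rfl)
      (muInt hμ hj0 hle le_rfl) ?_
    filter_upwards [mu_nonneg_ae hμ hj0 le_rfl, ae_restrict_mem measurableSet_Icc] with s h1 h2
    have hs1 : s ^ M ≤ 1 := pow_le_one₀ (le_trans hj0 h2.1) h2.2
    have h1' : 0 ≤ μ s := h1
    nlinarith [mul_nonneg (by linarith : (0:ℝ) ≤ 1 - s ^ M) h1']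
  exact step1

omit hC hC1 hγ hk in
lemma wMom_eq (n : ℕ) :
    wMom μ ((k:ℝ) ^ n) = ∫ s in (0:ℝ)..1, s ^ (k ^ n : ℕ) * μ s := by
  have hfun : (fun s : ℝ => s ^ ((k:ℝ) ^ n) * μ s) = (fun s : ℝ => s ^ (k ^ n : ℕ) * μ s) := by
    funext s
    rw [← Real.rpow_natCast s (k ^ n)]
    push_cast
    ring_nf
  unfold wMom
  rw [hfun]


omit hγ in
lemma mom_bounds (n : ℕ) :
    wHat μ (kr k n) ≤ (2 * C) * wMom μ ((k:ℝ) ^ n) ∧ 0 < wMom μ ((k:ℝ) ^ n) := by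
  set ρ := kr k n with hρdef
  have hρ0 := kr_nonneg hk n
  have hρ1 := kr_lt_one hk n
  set q : ℝ := (1 + ρ) / 2 with hq
  have hq0 : 0 ≤ q := by rw [hq]; linarith
  have hq1 : q < 1 := by rw [hq]; linarith
  have hρq : ρ ≤ q := by rw [hq]; linarith
  have hWq := wHat_pos hμ hq0 hq1
  have hkn := kpow_pos hk n
  set M : ℕ := k ^ n with hM
  have hMcast : ((M:ℕ):ℝ) = (k:ℝ) ^ n := by rw [hM]; push_cast; ring
  -- q ^ M ≥ 1/2
  have hqM : (1:ℝ)/2 ≤ q ^ M := by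
    have hber := one_add_mul_le_pow (a := q - 1) (by linarith) M
    have h1q : 1 - q = ((k:ℝ) ^ n)⁻¹ / 2 := by
      rw [hq, hρdef, ← one_sub_kr (k := k) n]
      ring
    have : (1:ℝ) + (M:ℝ) * (q - 1) = 1/2 := by
      rw [hMcast]
      rw [show (q - 1) = -((1:ℝ) - q) by ring, h1q]
      field_simp
      ring
    rw [this] at hber
    calc (1:ℝ)/2 ≤ (1 + (q - 1)) ^ M := hber
      _ = q ^ M := by norm_num
  -- integral bounds
  have hsplit : wMom μ ((k:ℝ) ^ n) = (∫ s in (0:ℝ)..q, s ^ M * μ s) +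
      ∫ s in q..1, s ^ M * μ s := by
    rw [wMom_eq hμ, ← intervalIntegral.integral_add_adjacent_intervals
      (momInt hμ hk le_rfl hq0 hq1.le) (momInt hμ hk hq0 hq1.le le_rfl)]
  have hfirst : 0 ≤ ∫ s in (0:ℝ)..q, s ^ M * μ s := mom_piece_nonneg hμ hk le_rfl hq0 hq1.le
  have hsecond : q ^ M * wHat μ q ≤ ∫ s in q..1, s ^ M * μ s := by
    have hmono : (∫ s in q..1, q ^ M * μ s) ≤ ∫ s in q..1, s ^ M * μ s := by
      refine intervalIntegral.integral_mono_ae_restrict hq1.le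
        ((muInt hμ hq0 hq1.le le_rfl).const_mul _) (momInt hμ hk hq0 hq1.le le_rfl) ?_
      filter_upwards [mu_nonneg_ae hμ hq0 le_rfl, ae_restrict_mem measurableSet_Icc]
        with s h1 h2
      have h1' : 0 ≤ μ s := h1
      exact mul_le_mul_of_nonneg_right (pow_le_pow_left₀ hq0 h2.1 M) h1'
    rwa [intervalIntegral.integral_const_mul] at hmono
  have hWqM : q ^ M * wHat μ q ≤ wMom μ ((k:ℝ) ^ n) := by
    rw [hsplit]; unfold wHat at hsecond ⊢; linarith
  have haux : (1/2:ℝ) * wHat μ q ≤ q ^ M * wHat μ q :=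
    mul_le_mul_of_nonneg_right hqM hWq.le
  have hmompos : 0 < wMom μ ((k:ℝ) ^ n) := by nlinarith
  refine ⟨?_, hmompos⟩
  have hCq : wHat μ ρ ≤ C * wHat μ q := hC ρ ⟨hρ0, hρ1⟩
  nlinarith [mul_le_mul_of_nonneg_left hWqM (by linarith : (0:ℝ) ≤ 2 * C)]

omit hC hC1 hγ in
lemma exists_N {r : ℝ} (h0 : 0 ≤ r) (h1 : r < 1) :
    ∃ N : ℕ, kr k N ≤ r ∧ r < kr k (N + 1) := by
  set y : ℝ := (1 - r)⁻¹ with hy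
  have h1r : 0 < 1 - r := by linarith
  have hy1 : (1:ℝ) ≤ y := by
    rw [hy, le_inv_comm₀ one_pos h1r]
    simp; linarith
  have hypos : 0 < y := by linarith
  set m : ℕ := ⌊y⌋₊ with hm
  have hm1 : 1 ≤ m := Nat.le_floor (by exact_mod_cast hy1)
  set N : ℕ := Nat.log k m with hN
  refine ⟨N, ?_, ?_⟩
  · have hlow : ((k:ℝ)) ^ N ≤ y := by
      calc ((k:ℝ)) ^ N = ((k ^ N : ℕ) : ℝ) := by push_cast; ring
        _ ≤ (m : ℝ) := by
            exact_mod_cast Nat.pow_log_le_self k (by omega)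
        _ ≤ y := Nat.floor_le hypos.le
    have : y⁻¹ ≤ ((k:ℝ) ^ N)⁻¹ := inv_anti₀ (kpow_pos hk N) hlow
    rw [hy, inv_inv] at this
    simp only [kr]
    linarith
  · have hhigh : y < ((k:ℝ)) ^ (N + 1) := by
      calc y < (m : ℝ) + 1 := Nat.lt_floor_add_one y
        _ ≤ ((k ^ (N+1) : ℕ) : ℝ) := by
            exact_mod_cast Nat.lt_pow_succ_log_self (by omega) m
        _ = ((k:ℝ)) ^ (N+1) := by push_cast; ring
    have : ((k:ℝ) ^ (N+1))⁻¹ < y⁻¹ := inv_strictAnti₀ hypos hhigh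
    rw [hy, inv_inv] at this
    simp only [kr]
    linarith

end Main

noncomputable def Bc (C : ℝ) (k : ℕ) : ℝ :=
  ∑' i : ℕ, (C ^ k) ^ (i + 1) * Real.exp (-((k:ℝ) ^ i))

section Main2
variable {C : ℝ} {k : ℕ} {γ : ℝ}
variable (hμ : IsRadialWeight μ)
  (hC : ∀ r ∈ Set.Ico (0:ℝ) 1, wHat μ r ≤ C * wHat μ ((1 + r) / 2))
  (hC1 : 1 < C) (hk : 2 ≤ k) (hγ : 0 < γ)
include hC1 hk

omit hC1 in
lemma summable_shape {a : ℝ} (ha : 0 < a) :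
    Summable (fun i : ℕ => a ^ (i + 1) * Real.exp (-((k:ℝ) ^ i))) := by
  have h := (summable_geo_exp hk (ha := ha) (hc := one_pos)).mul_left a
  refine h.congr fun i => ?_
  rw [one_mul, pow_succ]
  ring

lemma summable_Bc : Summable (fun i : ℕ => (C ^ k) ^ (i + 1) * Real.exp (-((k:ℝ) ^ i))) :=
  summable_shape hk (by positivity)

lemma Bc_nonneg : 0 ≤ Bc C k := by
  apply tsum_nonneg
  intro i
  have : (0:ℝ) < C ^ k := by positivity
  positivity

omit hC1 in
lemma kr_pow_exp {j n : ℕ} (hj : j < n) :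
    kr k (j+1) ^ (k ^ n : ℕ) ≤ Real.exp (-((k:ℝ) ^ (n - j - 1))) := by
  have hu : kr k (j+1) = 1 - ((k:ℝ) ^ (j+1))⁻¹ := rfl
  have hupos : (0:ℝ) < ((k:ℝ) ^ (j+1))⁻¹ := by
    have := kpow_pos hk (j+1); positivity
  have hexp : kr k (j+1) ≤ Real.exp (-((k:ℝ) ^ (j+1))⁻¹) := by
    rw [hu]
    linarith [Real.add_one_le_exp (-((k:ℝ) ^ (j+1))⁻¹)]
  calc kr k (j+1) ^ (k ^ n : ℕ) ≤ (Real.exp (-((k:ℝ) ^ (j+1))⁻¹)) ^ (k ^ n : ℕ) :=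
        pow_le_pow_left₀ (kr_nonneg hk (j+1)) hexp _
    _ = Real.exp ((k ^ n : ℕ) * (-((k:ℝ) ^ (j+1))⁻¹)) := by
        rw [← Real.exp_nat_mul]
    _ = Real.exp (-((k:ℝ) ^ (n - j - 1))) := by
        congr 1
        have hsplit : (k:ℝ) ^ n = (k:ℝ) ^ (j+1) * (k:ℝ) ^ (n - j - 1) := by
          rw [← pow_add]
          congr 1
          omega
        have hkj := kpow_pos hk (j+1)
        push_cast
        rw [hsplit]
        field_simp

include hμ hC

lemma mom_ub (n : ℕ) :
    wMom μ ((k:ℝ) ^ n) ≤ (1 + Bc C k) * wHat μ (kr k n) := by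
  have hWn := wHat_pos hμ (kr_nonneg hk n) (kr_lt_one hk n)
  rw [wMom_eq hμ, mom_chain hμ hk n]
  have hCk : (0:ℝ) < C ^ k := by positivity
  have hpiece : ∀ j < n, (∫ s in kr k j..kr k (j+1), s ^ (k ^ n : ℕ) * μ s) ≤
      ((C ^ k) ^ (n - j) * Real.exp (-((k:ℝ) ^ (n - j - 1)))) * wHat μ (kr k n) := by
    intro j hj
    have h1 : (∫ s in kr k j..kr k (j+1), s ^ (k ^ n : ℕ) * μ s) ≤
        kr k (j+1) ^ (k ^ n : ℕ) * wHat μ (kr k j) := mom_piece_ub hμ hk j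
    have h2 : kr k (j+1) ^ (k ^ n : ℕ) ≤ Real.exp (-((k:ℝ) ^ (n - j - 1))) :=
      kr_pow_exp hk hj
    have h3 : wHat μ (kr k j) ≤ (C ^ k) ^ (n - j) * wHat μ (kr k n) := by
      have := wk_iter hμ hC hC1 hk j (n - j)
      rwa [show j + (n - j) = n by omega] at this
    calc (∫ s in kr k j..kr k (j+1), s ^ (k ^ n : ℕ) * μ s)
        ≤ kr k (j+1) ^ (k ^ n : ℕ) * wHat μ (kr k j) := h1
      _ ≤ Real.exp (-((k:ℝ) ^ (n - j - 1))) * ((C ^ k) ^ (n - j) * wHat μ (kr k n)) := by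
          exact mul_le_mul h2 h3 (wHat_pos hμ (kr_nonneg hk j) (kr_lt_one hk j)).le
            (Real.exp_pos _).le
      _ = ((C ^ k) ^ (n - j) * Real.exp (-((k:ℝ) ^ (n - j - 1)))) * wHat μ (kr k n) := by
          ring
  have hsum : (∑ j ∈ Finset.range n, ∫ s in kr k j..kr k (j+1), s ^ (k ^ n : ℕ) * μ s) ≤
      (∑ j ∈ Finset.range n, (C ^ k) ^ (n - j) * Real.exp (-((k:ℝ) ^ (n - j - 1)))) *
        wHat μ (kr k n) := by
    rw [Finset.sum_mul]
    exact Finset.sum_le_sum fun j hj => hpiece j (Finset.mem_range.1 hj)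
  have hreflect : (∑ j ∈ Finset.range n, (C ^ k) ^ (n - j) * Real.exp (-((k:ℝ) ^ (n - j - 1))))
      = ∑ i ∈ Finset.range n, (C ^ k) ^ (i + 1) * Real.exp (-((k:ℝ) ^ i)) := by
    rw [← Finset.sum_range_reflect (fun i => (C ^ k) ^ (i + 1) * Real.exp (-((k:ℝ) ^ i))) n]
    apply Finset.sum_congr rfl
    intro j hj
    have hj' := Finset.mem_range.1 hj
    rw [show n - j = (n - 1 - j) + 1 by omega, show (n - 1 - j + 1) - 1 = n - 1 - j by omega]
  have hBc : (∑ i ∈ Finset.range n, (C ^ k) ^ (i + 1) * Real.exp (-((k:ℝ) ^ i))) ≤ Bc C k := by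
    apply Summable.sum_le_tsum (Finset.range n) (fun i _ => by positivity) (summable_Bc hC1 hk)
  have htail := mom_tail_ub hμ hk (M := k ^ n) n
  have hfinal : (∑ j ∈ Finset.range n, (C ^ k) ^ (n - j) * Real.exp (-((k:ℝ) ^ (n - j - 1)))) *
      wHat μ (kr k n) ≤ Bc C k * wHat μ (kr k n) := by
    rw [hreflect]
    exact mul_le_mul_of_nonneg_right hBc hWn.le
  have := add_le_add (hsum.trans hfinal) htail
  linarith

include hγ

lemma term_ub {r : ℝ} (h0 : 0 ≤ r) (n : ℕ) :
    r ^ (k ^ n) / wMom μ ((k:ℝ) ^ n) ^ γ ≤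
      (2 * C) ^ γ * (r ^ (k ^ n) * (wHat μ (kr k n) ^ γ)⁻¹) := by
  obtain ⟨hlb, hpos⟩ := mom_bounds hμ hC hC1 hk n
  have hW := wHat_pos hμ (kr_nonneg hk n) (kr_lt_one hk n)
  have hWγ : (0:ℝ) < wHat μ (kr k n) ^ γ := Real.rpow_pos_of_pos hW γ
  have hMγ : (0:ℝ) < wMom μ ((k:ℝ) ^ n) ^ γ := Real.rpow_pos_of_pos hpos γ
  have hrp : wHat μ (kr k n) ^ γ ≤ (2 * C) ^ γ * wMom μ ((k:ℝ) ^ n) ^ γ := by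
    calc wHat μ (kr k n) ^ γ ≤ ((2 * C) * wMom μ ((k:ℝ) ^ n)) ^ γ :=
          Real.rpow_le_rpow hW.le hlb hγ.le
      _ = (2 * C) ^ γ * wMom μ ((k:ℝ) ^ n) ^ γ :=
          Real.mul_rpow (by linarith) hpos.le
  have hinv := inv_le_mul_inv' hWγ hMγ hrp
  rw [div_eq_mul_inv]
  calc r ^ (k ^ n) * (wMom μ ((k:ℝ) ^ n) ^ γ)⁻¹
      ≤ r ^ (k ^ n) * ((2 * C) ^ γ * (wHat μ (kr k n) ^ γ)⁻¹) :=
        mul_le_mul_of_nonneg_left hinv (pow_nonneg h0 _)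
    _ = (2 * C) ^ γ * (r ^ (k ^ n) * (wHat μ (kr k n) ^ γ)⁻¹) := by ring

lemma term_lb {r : ℝ} (h0 : 0 ≤ r) (n : ℕ) :
    ((1 + Bc C k) ^ γ)⁻¹ * (r ^ (k ^ n) * (wHat μ (kr k n) ^ γ)⁻¹) ≤
      r ^ (k ^ n) / wMom μ ((k:ℝ) ^ n) ^ γ := by
  obtain ⟨hlb, hpos⟩ := mom_bounds hμ hC hC1 hk n
  have hub := mom_ub hμ hC hC1 hk n
  have hW := wHat_pos hμ (kr_nonneg hk n) (kr_lt_one hk n)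
  have hWγ : (0:ℝ) < wHat μ (kr k n) ^ γ := Real.rpow_pos_of_pos hW γ
  have hMγ : (0:ℝ) < wMom μ ((k:ℝ) ^ n) ^ γ := Real.rpow_pos_of_pos hpos γ
  have hA1 : (1:ℝ) ≤ 1 + Bc C k := by linarith [Bc_nonneg (C := C) (k := k) hC1 hk]
  have hAγ : (0:ℝ) < (1 + Bc C k) ^ γ := Real.rpow_pos_of_pos (by linarith) γ
  have hrp : wMom μ ((k:ℝ) ^ n) ^ γ ≤ (1 + Bc C k) ^ γ * wHat μ (kr k n) ^ γ := by
    calc wMom μ ((k:ℝ) ^ n) ^ γ ≤ ((1 + Bc C k) * wHat μ (kr k n)) ^ γ :=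
          Real.rpow_le_rpow hpos.le hub hγ.le
      _ = (1 + Bc C k) ^ γ * wHat μ (kr k n) ^ γ :=
          Real.mul_rpow (by linarith) hW.le
  have hinv := inv_le_mul_inv' hMγ hWγ hrp
  have hinv2 : ((1 + Bc C k) ^ γ)⁻¹ * (wHat μ (kr k n) ^ γ)⁻¹ ≤
      (wMom μ ((k:ℝ) ^ n) ^ γ)⁻¹ := by
    have := mul_le_mul_of_nonneg_left hinv (by positivity : (0:ℝ) ≤ ((1 + Bc C k) ^ γ)⁻¹)
    rwa [← mul_assoc, inv_mul_cancel₀ hAγ.ne', one_mul] at this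
  rw [div_eq_mul_inv]
  calc ((1 + Bc C k) ^ γ)⁻¹ * (r ^ (k ^ n) * (wHat μ (kr k n) ^ γ)⁻¹)
      = r ^ (k ^ n) * (((1 + Bc C k) ^ γ)⁻¹ * (wHat μ (kr k n) ^ γ)⁻¹) := by ring
    _ ≤ r ^ (k ^ n) * (wMom μ ((k:ℝ) ^ n) ^ γ)⁻¹ :=
        mul_le_mul_of_nonneg_left hinv2 (pow_nonneg h0 _)

omit hC hC1 in
lemma int_lb_sum (N : ℕ) :
    (1/2) * (∑ j ∈ Finset.range N, (wHat μ (kr k j) ^ γ)⁻¹) ≤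
      ∫ t in (0:ℝ)..kr k N, ((1 - t) * wHat μ t ^ γ)⁻¹ := by
  rw [int_g_chain hμ hk hγ N, Finset.mul_sum]
  exact Finset.sum_le_sum fun j _ => int_g_lb hμ hk hγ j

lemma int_ub_sum (N : ℕ) :
    (∫ t in (0:ℝ)..kr k N, ((1 - t) * wHat μ t ^ γ)⁻¹) ≤
      ((k:ℝ) * (C ^ k) ^ γ) * ∑ j ∈ Finset.range N, (wHat μ (kr k j) ^ γ)⁻¹ := by
  rw [int_g_chain hμ hk hγ N, Finset.mul_sum]
  refine Finset.sum_le_sum fun j _ => ?_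
  have h1 := int_g_ub hμ hk hγ j
  have h2 : (wHat μ (kr k (j+1)) ^ γ)⁻¹ ≤ ((C ^ k) ^ γ) * (wHat μ (kr k j) ^ γ)⁻¹ := by
    have := winv_iter hμ hC hC1 hk hγ j 1
    simpa using this
  calc (∫ t in kr k j..kr k (j+1), ((1 - t) * wHat μ t ^ γ)⁻¹)
      ≤ (k:ℝ) * (wHat μ (kr k (j+1)) ^ γ)⁻¹ := h1
    _ ≤ (k:ℝ) * (((C ^ k) ^ γ) * (wHat μ (kr k j) ^ γ)⁻¹) := by
        refine mul_le_mul_of_nonneg_left h2 (by positivity)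
    _ = (k:ℝ) * (C ^ k) ^ γ * (wHat μ (kr k j) ^ γ)⁻¹ := by ring


omit hC hC1 in
lemma winv_nonneg (n : ℕ) : (0:ℝ) ≤ (wHat μ (kr k n) ^ γ)⁻¹ := by
  have := Real.rpow_pos_of_pos (wHat_pos hμ (kr_nonneg hk n) (kr_lt_one hk n)) γ
  positivity

lemma term_nonneg {r : ℝ} (hr0 : 0 ≤ r) (n : ℕ) :
    0 ≤ r ^ (k ^ n) / wMom μ ((k:ℝ) ^ n) ^ γ :=
  div_nonneg (pow_nonneg hr0 _)
    (Real.rpow_pos_of_pos (mom_bounds hμ hC hC1 hk n).2 γ).le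

lemma tail_term_le {r : ℝ} (hr0 : 0 ≤ r) {N : ℕ} (hN2 : r ≤ kr k (N+1)) (m : ℕ) :
    r ^ (k ^ (m + (N+1))) / wMom μ ((k:ℝ) ^ (m + (N+1))) ^ γ ≤
      ((2*C) ^ γ * (wHat μ (kr k N) ^ γ)⁻¹) *
        (((C^k) ^ γ) ^ (m+1) * Real.exp (-((k:ℝ) ^ m))) := by
  have h1 := term_ub hμ hC hC1 hk hγ hr0 (m + (N+1))
  have h2 : r ^ (k ^ (m + (N+1))) ≤ Real.exp (-((k:ℝ) ^ m)) := by
    calc r ^ (k ^ (m + (N+1))) ≤ kr k (N+1) ^ (k ^ (m + (N+1))) :=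
          pow_le_pow_left₀ hr0 hN2 _
      _ ≤ Real.exp (-((k:ℝ) ^ ((m + (N+1)) - N - 1))) :=
          kr_pow_exp hk (show N < m + (N+1) by omega)
      _ = Real.exp (-((k:ℝ) ^ m)) := by rw [show (m + (N+1)) - N - 1 = m by omega]
  have h3 : (wHat μ (kr k (m + (N+1))) ^ γ)⁻¹ ≤
      ((C^k) ^ γ) ^ (m+1) * (wHat μ (kr k N) ^ γ)⁻¹ := by
    have := winv_iter hμ hC hC1 hk hγ N (m+1)
    rwa [show N + (m+1) = m + (N+1) by omega] at this
  have hTC : (0:ℝ) ≤ (2*C) ^ γ := (Real.rpow_pos_of_pos (by linarith) γ).le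
  calc r ^ (k ^ (m + (N+1))) / wMom μ ((k:ℝ) ^ (m + (N+1))) ^ γ
      ≤ (2*C) ^ γ * (r ^ (k ^ (m + (N+1))) * (wHat μ (kr k (m + (N+1))) ^ γ)⁻¹) := h1
    _ ≤ (2*C) ^ γ * (Real.exp (-((k:ℝ) ^ m)) *
          (((C^k) ^ γ) ^ (m+1) * (wHat μ (kr k N) ^ γ)⁻¹)) := by
        refine mul_le_mul_of_nonneg_left ?_ hTC
        exact mul_le_mul h2 h3 (winv_nonneg hμ hk hγ _) (Real.exp_pos _).le
    _ = ((2*C) ^ γ * (wHat μ (kr k N) ^ γ)⁻¹) *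
          (((C^k) ^ γ) ^ (m+1) * Real.exp (-((k:ℝ) ^ m))) := by ring

lemma summable_f {r : ℝ} (hr0 : 0 ≤ r) {N : ℕ} (hN2 : r ≤ kr k (N+1)) :
    Summable (fun n : ℕ => r ^ (k ^ n) / wMom μ ((k:ℝ) ^ n) ^ γ) := by
  rw [← summable_nat_add_iff (N+1)]
  refine Summable.of_nonneg_of_le (fun m => term_nonneg hμ hC hC1 hk hγ hr0 _)
    (fun m => tail_term_le hμ hC hC1 hk hγ hr0 hN2 m) ?_
  have hKγpos : (0:ℝ) < (C^k) ^ γ := Real.rpow_pos_of_pos (by positivity) γ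
  exact (summable_shape hk hKγpos).mul_left _


lemma caseA {r : ℝ} (hr0 : 0 ≤ r) (hrA : r < kr k 1) (hr1 : r < 1) :
    (((1 + Bc C k) ^ γ * ((k:ℝ) * (C ^ k) ^ γ))⁻¹) *
        (∫ t in (0:ℝ)..r, ((1 - t) * wHat μ t ^ γ)⁻¹) ≤
      (∑' n : ℕ, r ^ (k ^ n) / wMom μ ((k:ℝ) ^ n) ^ γ) ∧
    (∑' n : ℕ, r ^ (k ^ n) / wMom μ ((k:ℝ) ^ n) ^ γ) ≤
      ((2*C) ^ γ * Real.exp ((k:ℝ)⁻¹) *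
        ((∑' n : ℕ, ((C^k) ^ γ) ^ n * Real.exp (-((k:ℝ)⁻¹ * (k:ℝ) ^ n))) + 1)) *
      (∫ t in (0:ℝ)..r, ((1 - t) * wHat μ t ^ γ)⁻¹) := by
  have hkR := kR_two hk
  have hkpos : (0:ℝ) < k := by linarith
  have hW0 := wHat_pos hμ (kr_nonneg hk 0) (kr_lt_one hk 0)
  have hW0γ : (0:ℝ) < wHat μ (kr k 0) ^ γ := Real.rpow_pos_of_pos hW0 γ
  have hW1 := wHat_pos hμ (kr_nonneg hk 1) (kr_lt_one hk 1)
  have hW1γ : (0:ℝ) < wHat μ (kr k 1) ^ γ := Real.rpow_pos_of_pos hW1 γ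
  have hKγpos : (0:ℝ) < (C^k) ^ γ := Real.rpow_pos_of_pos (by positivity) γ
  have hAγpos : (0:ℝ) < (1 + Bc C k) ^ γ :=
    Real.rpow_pos_of_pos (by linarith [Bc_nonneg (C := C) (k := k) hC1 hk]) γ
  have hTCpos : (0:ℝ) < (2*C) ^ γ := Real.rpow_pos_of_pos (by linarith) γ
  have hgI : IntervalIntegrable (fun t => ((1 - t) * wHat μ t ^ γ)⁻¹) volume 0 r :=
    g_intble hμ hγ le_rfl hr0 hr1
  have hsf : Summable (fun n : ℕ => r ^ (k ^ n) / wMom μ ((k:ℝ) ^ n) ^ γ) :=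
    summable_f hμ hC hC1 hk hγ hr0 (N := 0) (by simpa using hrA.le)
  -- integral upper bound
  have hIub : (∫ t in (0:ℝ)..r, ((1 - t) * wHat μ t ^ γ)⁻¹) ≤
      r * ((k:ℝ) * ((C^k) ^ γ * (wHat μ (kr k 0) ^ γ)⁻¹)) := by
    have hconst : ∀ t ∈ Icc (0:ℝ) r, ((1 - t) * wHat μ t ^ γ)⁻¹ ≤
        ((1 - kr k 1) * wHat μ (kr k 1) ^ γ)⁻¹ := by
      intro t ht
      exact inv_anti₀ (g_prod_pos hμ hγ (kr_nonneg hk 1) (kr_lt_one hk 1))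
        (g_anti hμ hγ ht.1 (ht.2.trans (hrA.le.trans (le_refl _))) (kr_lt_one hk 1))
    have hint := intervalIntegral.integral_mono_on hr0 hgI intervalIntegrable_const hconst
    rw [intervalIntegral.integral_const, smul_eq_mul, sub_zero] at hint
    have hceq : ((1 - kr k 1) * wHat μ (kr k 1) ^ γ)⁻¹ =
        (k:ℝ) * (wHat μ (kr k 1) ^ γ)⁻¹ := by
      rw [one_sub_kr (k := k) 1, pow_one, mul_inv, inv_inv]
    have hstep : (wHat μ (kr k 1) ^ γ)⁻¹ ≤ (C^k) ^ γ * (wHat μ (kr k 0) ^ γ)⁻¹ := by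
      have := winv_iter hμ hC hC1 hk hγ 0 1
      simpa using this
    calc (∫ t in (0:ℝ)..r, ((1 - t) * wHat μ t ^ γ)⁻¹)
        ≤ r * ((1 - kr k 1) * wHat μ (kr k 1) ^ γ)⁻¹ := hint
      _ = r * ((k:ℝ) * (wHat μ (kr k 1) ^ γ)⁻¹) := by rw [hceq]
      _ ≤ r * ((k:ℝ) * ((C^k) ^ γ * (wHat μ (kr k 0) ^ γ)⁻¹)) := by
          refine mul_le_mul_of_nonneg_left (mul_le_mul_of_nonneg_left hstep hkpos.le) hr0
  -- integral lower bound
  have hIlb : r * (wHat μ (kr k 0) ^ γ)⁻¹ ≤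
      ∫ t in (0:ℝ)..r, ((1 - t) * wHat μ t ^ γ)⁻¹ := by
    have hconst : ∀ t ∈ Icc (0:ℝ) r, ((1 - kr k 0) * wHat μ (kr k 0) ^ γ)⁻¹ ≤
        ((1 - t) * wHat μ t ^ γ)⁻¹ := by
      intro t ht
      exact inv_anti₀ (g_prod_pos hμ hγ ht.1 (lt_of_le_of_lt ht.2 hr1))
        (g_anti hμ hγ (kr_nonneg hk 0) (by rw [kr_zero]; exact ht.1)
          (lt_of_le_of_lt ht.2 hr1))
    have hint := intervalIntegral.integral_mono_on hr0 intervalIntegrable_const hgI hconst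
    rw [intervalIntegral.integral_const, smul_eq_mul, sub_zero] at hint
    have hceq : ((1 - kr k 0) * wHat μ (kr k 0) ^ γ)⁻¹ = (wHat μ (kr k 0) ^ γ)⁻¹ := by
      rw [kr_zero]
      norm_num
    rwa [hceq] at hint
  constructor
  · -- lower bound
    have hf0 : ((1 + Bc C k) ^ γ)⁻¹ * (r ^ (k ^ 0) * (wHat μ (kr k 0) ^ γ)⁻¹) ≤
        r ^ (k ^ 0) / wMom μ ((k:ℝ) ^ 0) ^ γ := term_lb hμ hC hC1 hk hγ hr0 0
    have hr00 : r ^ (k ^ 0 : ℕ) = r := by norm_num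
    rw [hr00] at hf0
    have hle : r ^ (k ^ 0) / wMom μ ((k:ℝ) ^ 0) ^ γ ≤
        ∑' n : ℕ, r ^ (k ^ n) / wMom μ ((k:ℝ) ^ n) ^ γ :=
      Summable.le_tsum hsf 0 fun j _ => term_nonneg hμ hC hC1 hk hγ hr0 j
    have hkey : (((1 + Bc C k) ^ γ * ((k:ℝ) * (C ^ k) ^ γ))⁻¹) *
        (r * ((k:ℝ) * ((C^k) ^ γ * (wHat μ (kr k 0) ^ γ)⁻¹))) =
        ((1 + Bc C k) ^ γ)⁻¹ * (r * (wHat μ (kr k 0) ^ γ)⁻¹) := by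
      field_simp
    calc (((1 + Bc C k) ^ γ * ((k:ℝ) * (C ^ k) ^ γ))⁻¹) *
          (∫ t in (0:ℝ)..r, ((1 - t) * wHat μ t ^ γ)⁻¹)
        ≤ (((1 + Bc C k) ^ γ * ((k:ℝ) * (C ^ k) ^ γ))⁻¹) *
          (r * ((k:ℝ) * ((C^k) ^ γ * (wHat μ (kr k 0) ^ γ)⁻¹))) := by
          refine mul_le_mul_of_nonneg_left hIub (by positivity)
      _ = ((1 + Bc C k) ^ γ)⁻¹ * (r * (wHat μ (kr k 0) ^ γ)⁻¹) := hkey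
      _ ≤ r ^ (k ^ 0) / wMom μ ((k:ℝ) ^ 0) ^ γ := by rw [hr00]; exact hf0
      _ ≤ _ := hle
  · -- upper bound
    set E : ℝ := Real.exp ((k:ℝ)⁻¹) with hE
    have hEpos : 0 < E := Real.exp_pos _
    have hterm : ∀ n : ℕ, r ^ (k ^ n) / wMom μ ((k:ℝ) ^ n) ^ γ ≤
        ((2*C) ^ γ * E * (r * (wHat μ (kr k 0) ^ γ)⁻¹)) *
          (((C^k) ^ γ) ^ n * Real.exp (-((k:ℝ)⁻¹ * (k:ℝ) ^ n))) := by
      intro n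
      have h1 := term_ub hμ hC hC1 hk hγ hr0 n
      have hp : 1 ≤ k ^ n := Nat.one_le_pow _ _ (by omega)
      have hr2 : r ^ (k ^ n) ≤ (E * Real.exp (-((k:ℝ)⁻¹ * (k:ℝ) ^ n))) * r := by
        have hsplit : r ^ (k ^ n) = r ^ (k ^ n - 1) * r := by
          rw [← pow_succ, show (k ^ n - 1) + 1 = k ^ n by omega]
        rw [hsplit]
        have hkr1exp : kr k 1 ≤ Real.exp (-(k:ℝ)⁻¹) := by
          have : kr k 1 = 1 - ((k:ℝ))⁻¹ := by
            simp [kr]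
          rw [this]
          linarith [Real.add_one_le_exp (-(k:ℝ)⁻¹)]
        have h2 : r ^ (k ^ n - 1) ≤ E * Real.exp (-((k:ℝ)⁻¹ * (k:ℝ) ^ n)) := by
          calc r ^ (k ^ n - 1) ≤ kr k 1 ^ (k ^ n - 1) :=
                pow_le_pow_left₀ hr0 hrA.le _
            _ ≤ (Real.exp (-(k:ℝ)⁻¹)) ^ (k ^ n - 1) :=
                pow_le_pow_left₀ (kr_nonneg hk 1) hkr1exp _
            _ = Real.exp (((k ^ n - 1 : ℕ):ℝ) * (-(k:ℝ)⁻¹)) := by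
                rw [← Real.exp_nat_mul]
            _ = E * Real.exp (-((k:ℝ)⁻¹ * (k:ℝ) ^ n)) := by
                rw [hE, ← Real.exp_add]
                congr 1
                have hcast : ((k ^ n - 1 : ℕ):ℝ) = (k:ℝ) ^ n - 1 := by
                  push_cast [hp]
                  ring
                rw [hcast]
                field_simp
                ring
        exact mul_le_mul_of_nonneg_right h2 hr0
      have h3 : (wHat μ (kr k n) ^ γ)⁻¹ ≤ ((C^k) ^ γ) ^ n * (wHat μ (kr k 0) ^ γ)⁻¹ := by
        have := winv_iter hμ hC hC1 hk hγ 0 n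
        simpa using this
      calc r ^ (k ^ n) / wMom μ ((k:ℝ) ^ n) ^ γ
          ≤ (2*C) ^ γ * (r ^ (k ^ n) * (wHat μ (kr k n) ^ γ)⁻¹) := h1
        _ ≤ (2*C) ^ γ * (((E * Real.exp (-((k:ℝ)⁻¹ * (k:ℝ) ^ n))) * r) *
              (((C^k) ^ γ) ^ n * (wHat μ (kr k 0) ^ γ)⁻¹)) := by
            refine mul_le_mul_of_nonneg_left ?_ hTCpos.le
            exact mul_le_mul hr2 h3 (winv_nonneg hμ hk hγ n) (by positivity)
        _ = ((2*C) ^ γ * E * (r * (wHat μ (kr k 0) ^ γ)⁻¹)) *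
              (((C^k) ^ γ) ^ n * Real.exp (-((k:ℝ)⁻¹ * (k:ℝ) ^ n))) := by ring
    have hsumB3 : Summable (fun n : ℕ => ((C^k) ^ γ) ^ n *
        Real.exp (-((k:ℝ)⁻¹ * (k:ℝ) ^ n))) :=
      summable_geo_exp hk hKγpos (by positivity)
    have htsum : (∑' n : ℕ, r ^ (k ^ n) / wMom μ ((k:ℝ) ^ n) ^ γ) ≤
        ((2*C) ^ γ * E * (r * (wHat μ (kr k 0) ^ γ)⁻¹)) *
          ∑' n : ℕ, ((C^k) ^ γ) ^ n * Real.exp (-((k:ℝ)⁻¹ * (k:ℝ) ^ n)) := by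
      rw [← tsum_mul_left]
      exact Summable.tsum_le_tsum hterm hsf (hsumB3.mul_left _)
    set B₃ : ℝ := ∑' n : ℕ, ((C^k) ^ γ) ^ n * Real.exp (-((k:ℝ)⁻¹ * (k:ℝ) ^ n)) with hB3
    have hB3nn : 0 ≤ B₃ := tsum_nonneg fun n => by positivity
    calc (∑' n : ℕ, r ^ (k ^ n) / wMom μ ((k:ℝ) ^ n) ^ γ)
        ≤ ((2*C) ^ γ * E * (r * (wHat μ (kr k 0) ^ γ)⁻¹)) * B₃ := htsum
      _ = ((2*C) ^ γ * E * B₃) * (r * (wHat μ (kr k 0) ^ γ)⁻¹) := by ring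
      _ ≤ ((2*C) ^ γ * E * (B₃ + 1)) * (r * (wHat μ (kr k 0) ^ γ)⁻¹) := by
          refine mul_le_mul_of_nonneg_right ?_ (by positivity)
          nlinarith
      _ ≤ ((2*C) ^ γ * E * (B₃ + 1)) *
            (∫ t in (0:ℝ)..r, ((1 - t) * wHat μ t ^ γ)⁻¹) := by
          refine mul_le_mul_of_nonneg_left hIlb (by positivity)


set_option maxHeartbeats 1000000 in
lemma caseB {r : ℝ} {N : ℕ} (hN : 1 ≤ N) (hNr : kr k N ≤ r) (hrN : r < kr k (N+1))
    (hr0 : 0 ≤ r) (hr1 : r < 1) :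
    (((1 + Bc C k) ^ γ * (2 * ((k:ℝ) * (C^k) ^ γ * (1 + (C^k) ^ γ))))⁻¹) *
        (∫ t in (0:ℝ)..r, ((1 - t) * wHat μ t ^ γ)⁻¹) ≤
      (∑' n : ℕ, r ^ (k ^ n) / wMom μ ((k:ℝ) ^ n) ^ γ) ∧
    (∑' n : ℕ, r ^ (k ^ n) / wMom μ ((k:ℝ) ^ n) ^ γ) ≤
      (2 * ((2*C) ^ γ * (1 + (C^k) ^ γ) + (2*C) ^ γ * (C^k) ^ γ *
        ∑' m : ℕ, ((C^k) ^ γ) ^ (m+1) * Real.exp (-((k:ℝ) ^ m)))) *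
      (∫ t in (0:ℝ)..r, ((1 - t) * wHat μ t ^ γ)⁻¹) := by
  have hkR := kR_two hk
  have hkpos : (0:ℝ) < k := by linarith
  have hKγpos : (0:ℝ) < (C^k) ^ γ := Real.rpow_pos_of_pos (by positivity) γ
  have hAγpos : (0:ℝ) < (1 + Bc C k) ^ γ :=
    Real.rpow_pos_of_pos (by linarith [Bc_nonneg (C := C) (k := k) hC1 hk]) γ
  have hTCpos : (0:ℝ) < (2*C) ^ γ := Real.rpow_pos_of_pos (by linarith) γ
  set SN : ℝ := ∑ j ∈ Finset.range N, (wHat μ (kr k j) ^ γ)⁻¹ with hSN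
  have hSnn : 0 ≤ SN := Finset.sum_nonneg fun j _ => winv_nonneg hμ hk hγ j
  have hsf : Summable (fun n : ℕ => r ^ (k ^ n) / wMom μ ((k:ℝ) ^ n) ^ γ) :=
    summable_f hμ hC hC1 hk hγ hr0 hrN.le
  have hsumB2 : Summable (fun m : ℕ => ((C^k) ^ γ) ^ (m+1) * Real.exp (-((k:ℝ) ^ m))) :=
    summable_shape hk hKγpos
  set B₂ : ℝ := ∑' m : ℕ, ((C^k) ^ γ) ^ (m+1) * Real.exp (-((k:ℝ) ^ m)) with hB2
  have hB2nn : 0 ≤ B₂ := tsum_nonneg fun m => by positivity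
  have hWNle : (wHat μ (kr k N) ^ γ)⁻¹ ≤ (C^k) ^ γ * SN := by
    have h := winv_iter hμ hC hC1 hk hγ (N-1) 1
    rw [show N - 1 + 1 = N by omega, pow_one] at h
    have hmem : (wHat μ (kr k (N-1)) ^ γ)⁻¹ ≤ SN := by
      refine Finset.single_le_sum (fun j _ => winv_nonneg hμ hk hγ j) ?_
      exact Finset.mem_range.2 (by omega)
    calc (wHat μ (kr k N) ^ γ)⁻¹ ≤ (C^k) ^ γ * (wHat μ (kr k (N-1)) ^ γ)⁻¹ := h
      _ ≤ (C^k) ^ γ * SN := mul_le_mul_of_nonneg_left hmem hKγpos.le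
  -- integral bounds
  have hIlb : (1/2) * SN ≤ ∫ t in (0:ℝ)..r, ((1 - t) * wHat μ t ^ γ)⁻¹ := by
    have hadj := intervalIntegral.integral_add_adjacent_intervals
      (g_intble hμ hγ le_rfl (kr_nonneg hk N) (kr_lt_one hk N))
      (g_intble hμ hγ (kr_nonneg hk N) hNr hr1)
    have hnn := int_g_nonneg hμ hγ (kr_nonneg hk N) hNr hr1
    have h1 := int_lb_sum hμ hk hγ N
    rw [← hSN] at h1
    linarith
  have hIub : (∫ t in (0:ℝ)..r, ((1 - t) * wHat μ t ^ γ)⁻¹) ≤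
      ((k:ℝ) * (C^k) ^ γ * (1 + (C^k) ^ γ)) * SN := by
    have hadj := intervalIntegral.integral_add_adjacent_intervals
      (g_intble hμ hγ le_rfl hr0 hr1)
      (g_intble hμ hγ hr0 hrN.le (kr_lt_one hk (N+1)))
    have hnn := int_g_nonneg hμ hγ hr0 hrN.le (kr_lt_one hk (N+1))
    have h1 := int_ub_sum hμ hC hC1 hk hγ (N+1)
    rw [Finset.sum_range_succ, ← hSN] at h1
    have h2 : (∫ t in (0:ℝ)..r, ((1 - t) * wHat μ t ^ γ)⁻¹) ≤
        ((k:ℝ) * (C^k) ^ γ) * (SN + (wHat μ (kr k N) ^ γ)⁻¹) := by linarith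
    calc (∫ t in (0:ℝ)..r, ((1 - t) * wHat μ t ^ γ)⁻¹)
        ≤ ((k:ℝ) * (C^k) ^ γ) * (SN + (wHat μ (kr k N) ^ γ)⁻¹) := h2
      _ ≤ ((k:ℝ) * (C^k) ^ γ) * (SN + (C^k) ^ γ * SN) := by
          refine mul_le_mul_of_nonneg_left (by linarith) (by positivity)
      _ = ((k:ℝ) * (C^k) ^ γ * (1 + (C^k) ^ γ)) * SN := by ring
  constructor
  · -- lower bound
    have hhalf : ∀ n, n < N → (1/2:ℝ) ≤ r ^ (k ^ n) := by
      intro n hn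
      have hNsplit : (k:ℝ) ^ N = (k:ℝ) ^ (N-1) * k := by
        rw [← pow_succ, show N - 1 + 1 = N by omega]
      have hkNpos := kpow_pos hk N
      have hkN1pos := kpow_pos hk (N-1)
      have hinv1 : ((k:ℝ) ^ N)⁻¹ ≤ 1 := by
        simpa using inv_anti₀ one_pos (kpow_one_le hk N)
      have hber := one_add_mul_le_pow (a := -((k:ℝ) ^ N)⁻¹)
        (by linarith) (k ^ (N-1))
      have hLHS : (1:ℝ) + (k ^ (N-1) : ℕ) * (-((k:ℝ) ^ N)⁻¹) = 1 - (k:ℝ)⁻¹ := by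
        push_cast
        rw [hNsplit]
        field_simp
        ring
      have hb : (1/2:ℝ) ≤ kr k N ^ (k ^ (N-1)) := by
        have hkinv : (k:ℝ)⁻¹ ≤ 1/2 := by
          rw [inv_le_comm₀ (by linarith) (by norm_num)]
          linarith
        have hRHS : ((1:ℝ) + -((k:ℝ) ^ N)⁻¹) = kr k N := by simp only [kr]; ring
        rw [hLHS, hRHS] at hber
        linarith
      calc (1/2:ℝ) ≤ kr k N ^ (k ^ (N-1)) := hb
        _ ≤ kr k N ^ (k ^ n) := by
            refine pow_le_pow_of_le_one (kr_nonneg hk N) (kr_lt_one hk N).le ?_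
            exact Nat.pow_le_pow_right (by omega) (by omega)
        _ ≤ r ^ (k ^ n) := pow_le_pow_left₀ (kr_nonneg hk N) hNr _
    have hlow : (((1 + Bc C k) ^ γ)⁻¹ * (1/2)) * SN ≤
        ∑ n ∈ Finset.range N, r ^ (k ^ n) / wMom μ ((k:ℝ) ^ n) ^ γ := by
      rw [hSN, Finset.mul_sum]
      refine Finset.sum_le_sum fun n hn => ?_
      have hn' := Finset.mem_range.1 hn
      have h1 := term_lb hμ hC hC1 hk hγ hr0 n
      have h2 : (1/2:ℝ) * (wHat μ (kr k n) ^ γ)⁻¹ ≤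
          r ^ (k ^ n) * (wHat μ (kr k n) ^ γ)⁻¹ :=
        mul_le_mul_of_nonneg_right (hhalf n hn') (winv_nonneg hμ hk hγ n)
      calc ((1 + Bc C k) ^ γ)⁻¹ * (1/2) * (wHat μ (kr k n) ^ γ)⁻¹
          = ((1 + Bc C k) ^ γ)⁻¹ * ((1/2) * (wHat μ (kr k n) ^ γ)⁻¹) := by ring
        _ ≤ ((1 + Bc C k) ^ γ)⁻¹ * (r ^ (k ^ n) * (wHat μ (kr k n) ^ γ)⁻¹) :=
            mul_le_mul_of_nonneg_left h2 (by positivity)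
        _ ≤ r ^ (k ^ n) / wMom μ ((k:ℝ) ^ n) ^ γ := h1
    have hpart : (∑ n ∈ Finset.range N, r ^ (k ^ n) / wMom μ ((k:ℝ) ^ n) ^ γ) ≤
        ∑' n : ℕ, r ^ (k ^ n) / wMom μ ((k:ℝ) ^ n) ^ γ :=
      Summable.sum_le_tsum (Finset.range N) (fun i _ => term_nonneg hμ hC hC1 hk hγ hr0 i) hsf
    have hkey : (((1 + Bc C k) ^ γ * (2 * ((k:ℝ) * (C^k) ^ γ * (1 + (C^k) ^ γ))))⁻¹) *
        (((k:ℝ) * (C^k) ^ γ * (1 + (C^k) ^ γ)) * SN) =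
        (((1 + Bc C k) ^ γ)⁻¹ * (1/2)) * SN := by
      have h1 : (0:ℝ) < 1 + (C^k) ^ γ := by linarith
      field_simp
    calc (((1 + Bc C k) ^ γ * (2 * ((k:ℝ) * (C^k) ^ γ * (1 + (C^k) ^ γ))))⁻¹) *
          (∫ t in (0:ℝ)..r, ((1 - t) * wHat μ t ^ γ)⁻¹)
        ≤ (((1 + Bc C k) ^ γ * (2 * ((k:ℝ) * (C^k) ^ γ * (1 + (C^k) ^ γ))))⁻¹) *
          (((k:ℝ) * (C^k) ^ γ * (1 + (C^k) ^ γ)) * SN) := by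
          refine mul_le_mul_of_nonneg_left hIub (by positivity)
      _ = (((1 + Bc C k) ^ γ)⁻¹ * (1/2)) * SN := hkey
      _ ≤ ∑ n ∈ Finset.range N, r ^ (k ^ n) / wMom μ ((k:ℝ) ^ n) ^ γ := hlow
      _ ≤ _ := hpart
  · -- upper bound
    have hsplitS : (∑' n : ℕ, r ^ (k ^ n) / wMom μ ((k:ℝ) ^ n) ^ γ) =
        (∑ n ∈ Finset.range (N+1), r ^ (k ^ n) / wMom μ ((k:ℝ) ^ n) ^ γ) +
          ∑' m : ℕ, r ^ (k ^ (m + (N+1))) / wMom μ ((k:ℝ) ^ (m + (N+1))) ^ γ :=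
      (Summable.sum_add_tsum_nat_add (N+1) hsf).symm
    have hhead : (∑ n ∈ Finset.range (N+1), r ^ (k ^ n) / wMom μ ((k:ℝ) ^ n) ^ γ) ≤
        (2*C) ^ γ * (SN + (wHat μ (kr k N) ^ γ)⁻¹) := by
      have hterm : ∀ n, r ^ (k ^ n) / wMom μ ((k:ℝ) ^ n) ^ γ ≤
          (2*C) ^ γ * (wHat μ (kr k n) ^ γ)⁻¹ := by
        intro n
        have h1 := term_ub hμ hC hC1 hk hγ hr0 n
        have h2 : r ^ (k ^ n) * (wHat μ (kr k n) ^ γ)⁻¹ ≤ (wHat μ (kr k n) ^ γ)⁻¹ := by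
          have := pow_le_one₀ hr0 hr1.le (n := k ^ n)
          nlinarith [winv_nonneg hμ hk hγ n]
        calc r ^ (k ^ n) / wMom μ ((k:ℝ) ^ n) ^ γ
            ≤ (2*C) ^ γ * (r ^ (k ^ n) * (wHat μ (kr k n) ^ γ)⁻¹) := h1
          _ ≤ (2*C) ^ γ * (wHat μ (kr k n) ^ γ)⁻¹ :=
              mul_le_mul_of_nonneg_left h2 hTCpos.le
      calc (∑ n ∈ Finset.range (N+1), r ^ (k ^ n) / wMom μ ((k:ℝ) ^ n) ^ γ)
          ≤ ∑ n ∈ Finset.range (N+1), (2*C) ^ γ * (wHat μ (kr k n) ^ γ)⁻¹ :=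
            Finset.sum_le_sum fun n _ => hterm n
        _ = (2*C) ^ γ * (SN + (wHat μ (kr k N) ^ γ)⁻¹) := by
            rw [← Finset.mul_sum, Finset.sum_range_succ, ← hSN]
    have htail : (∑' m : ℕ, r ^ (k ^ (m + (N+1))) / wMom μ ((k:ℝ) ^ (m + (N+1))) ^ γ) ≤
        ((2*C) ^ γ * (wHat μ (kr k N) ^ γ)⁻¹) * B₂ := by
      rw [hB2, ← tsum_mul_left]
      exact Summable.tsum_le_tsum (tail_term_le hμ hC hC1 hk hγ hr0 hrN.le)
        ((summable_nat_add_iff (N+1)).2 hsf) (hsumB2.mul_left _)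
    have hchain : (∑' n : ℕ, r ^ (k ^ n) / wMom μ ((k:ℝ) ^ n) ^ γ) ≤
        ((2*C) ^ γ * (1 + (C^k) ^ γ) + (2*C) ^ γ * (C^k) ^ γ * B₂) * SN := by
      rw [hsplitS]
      have hWN := winv_nonneg hμ hk hγ N
      calc (∑ n ∈ Finset.range (N+1), r ^ (k ^ n) / wMom μ ((k:ℝ) ^ n) ^ γ) +
            ∑' m : ℕ, r ^ (k ^ (m + (N+1))) / wMom μ ((k:ℝ) ^ (m + (N+1))) ^ γ
          ≤ (2*C) ^ γ * (SN + (wHat μ (kr k N) ^ γ)⁻¹) +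
              ((2*C) ^ γ * (wHat μ (kr k N) ^ γ)⁻¹) * B₂ := add_le_add hhead htail
        _ ≤ (2*C) ^ γ * (SN + (C^k) ^ γ * SN) +
              ((2*C) ^ γ * ((C^k) ^ γ * SN)) * B₂ := by
            refine add_le_add (mul_le_mul_of_nonneg_left (by linarith) hTCpos.le) ?_
            refine mul_le_mul_of_nonneg_right
              (mul_le_mul_of_nonneg_left hWNle hTCpos.le) hB2nn
        _ = ((2*C) ^ γ * (1 + (C^k) ^ γ) + (2*C) ^ γ * (C^k) ^ γ * B₂) * SN := by ring
    have hXnn : (0:ℝ) ≤ (2*C) ^ γ * (1 + (C^k) ^ γ) + (2*C) ^ γ * (C^k) ^ γ * B₂ := by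
      positivity
    calc (∑' n : ℕ, r ^ (k ^ n) / wMom μ ((k:ℝ) ^ n) ^ γ)
        ≤ ((2*C) ^ γ * (1 + (C^k) ^ γ) + (2*C) ^ γ * (C^k) ^ γ * B₂) * SN := hchain
      _ ≤ ((2*C) ^ γ * (1 + (C^k) ^ γ) + (2*C) ^ γ * (C^k) ^ γ * B₂) *
            (2 * ∫ t in (0:ℝ)..r, ((1 - t) * wHat μ t ^ γ)⁻¹) := by
          refine mul_le_mul_of_nonneg_left (by linarith) hXnn
      _ = (2 * ((2*C) ^ γ * (1 + (C^k) ^ γ) + (2*C) ^ γ * (C^k) ^ γ * B₂)) *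
            (∫ t in (0:ℝ)..r, ((1 - t) * wHat μ t ^ γ)⁻¹) := by ring

end Main2
end AuxSRM

open AuxSRM in
set_option maxHeartbeats 1000000 in
/-- **Lemma (sum vs. integral, `D̂` case).** If `μ ∈ D̂`, `γ > 0` and `k ∈ ℕ`, `k ≥ 2`,
then `Σ_{n≥0} r^{kⁿ}/μ_{kⁿ}^γ ≍ ∫_0^r dt/((1-t) μ̂(t)^γ)` for `0 ≤ r < 1`. -/
theorem sum_rpow_moment_asymp_integral (μ : ℝ → ℝ) (hμ : IsRadialWeight μ)
    (hμD : Dhat μ) (γ : ℝ) (hγ : 0 < γ) (k : ℕ) (hk : 2 ≤ k) :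
    ∃ C₁ > (0:ℝ), ∃ C₂ > (0:ℝ), ∀ r ∈ Set.Ico (0:ℝ) 1,
      C₁ * ∫ t in (0:ℝ)..r, ((1 - t) * wHat μ t ^ γ)⁻¹ ≤
          (∑' n : ℕ, r ^ (k ^ n) / wMom μ ((k : ℝ) ^ n) ^ γ) ∧
        (∑' n : ℕ, r ^ (k ^ n) / wMom μ ((k : ℝ) ^ n) ^ γ) ≤
          C₂ * ∫ t in (0:ℝ)..r, ((1 - t) * wHat μ t ^ γ)⁻¹ := by
  obtain ⟨C, hC1, hC⟩ := hμD
  have hkR := kR_two hk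
  have hkpos : (0:ℝ) < k := by linarith
  have hKγpos : (0:ℝ) < (C^k) ^ γ := Real.rpow_pos_of_pos (by positivity) γ
  have hAγpos : (0:ℝ) < (1 + Bc C k) ^ γ :=
    Real.rpow_pos_of_pos (by linarith [Bc_nonneg (C := C) (k := k) hC1 hk]) γ
  have hTCpos : (0:ℝ) < (2*C) ^ γ := Real.rpow_pos_of_pos (by linarith) γ
  set c1a : ℝ := ((1 + Bc C k) ^ γ * ((k:ℝ) * (C ^ k) ^ γ))⁻¹ with hc1a
  set c1b : ℝ := ((1 + Bc C k) ^ γ * (2 * ((k:ℝ) * (C^k) ^ γ * (1 + (C^k) ^ γ))))⁻¹ with hc1b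
  set c2a : ℝ := (2*C) ^ γ * Real.exp ((k:ℝ)⁻¹) *
    ((∑' n : ℕ, ((C^k) ^ γ) ^ n * Real.exp (-((k:ℝ)⁻¹ * (k:ℝ) ^ n))) + 1) with hc2a
  set c2b : ℝ := 2 * ((2*C) ^ γ * (1 + (C^k) ^ γ) + (2*C) ^ γ * (C^k) ^ γ *
    ∑' m : ℕ, ((C^k) ^ γ) ^ (m+1) * Real.exp (-((k:ℝ) ^ m))) with hc2b
  have hc1apos : 0 < c1a := by
    rw [hc1a]
    have : (0:ℝ) < (1 + Bc C k) ^ γ * ((k:ℝ) * (C ^ k) ^ γ) := by positivity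
    positivity
  have hc1bpos : 0 < c1b := by
    rw [hc1b]
    have h1 : (0:ℝ) < 1 + (C^k) ^ γ := by linarith
    have : (0:ℝ) < (1 + Bc C k) ^ γ * (2 * ((k:ℝ) * (C^k) ^ γ * (1 + (C^k) ^ γ))) := by
      positivity
    positivity
  have hB3nn : (0:ℝ) ≤ ∑' n : ℕ, ((C^k) ^ γ) ^ n * Real.exp (-((k:ℝ)⁻¹ * (k:ℝ) ^ n)) :=
    tsum_nonneg fun n => by positivity
  have hB2nn : (0:ℝ) ≤ ∑' m : ℕ, ((C^k) ^ γ) ^ (m+1) * Real.exp (-((k:ℝ) ^ m)) :=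
    tsum_nonneg fun m => by positivity
  have hc2apos : 0 < c2a := by
    rw [hc2a]
    exact mul_pos (mul_pos hTCpos (Real.exp_pos _)) (by linarith)
  have hc2bpos : 0 < c2b := by
    rw [hc2b]
    have h1 : (0:ℝ) < (2*C) ^ γ * (1 + (C^k) ^ γ) := by nlinarith
    have h2 : (0:ℝ) ≤ (2*C) ^ γ * (C^k) ^ γ *
        ∑' m : ℕ, ((C^k) ^ γ) ^ (m+1) * Real.exp (-((k:ℝ) ^ m)) := by
      exact mul_nonneg (by positivity) hB2nn
    linarith
  refine ⟨min c1a c1b, lt_min hc1apos hc1bpos, max c2a c2b,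
    lt_of_lt_of_le hc2apos (le_max_left _ _), ?_⟩
  rintro r ⟨hr0, hr1⟩
  have hInn : 0 ≤ ∫ t in (0:ℝ)..r, ((1 - t) * wHat μ t ^ γ)⁻¹ :=
    int_g_nonneg hμ hγ le_rfl hr0 hr1
  by_cases hcase : r < kr k 1
  · obtain ⟨h1, h2⟩ := caseA hμ hC hC1 hk hγ hr0 hcase hr1
    constructor
    · calc min c1a c1b * ∫ t in (0:ℝ)..r, ((1 - t) * wHat μ t ^ γ)⁻¹
          ≤ c1a * ∫ t in (0:ℝ)..r, ((1 - t) * wHat μ t ^ γ)⁻¹ :=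
            mul_le_mul_of_nonneg_right (min_le_left _ _) hInn
        _ ≤ _ := h1
    · refine h2.trans (mul_le_mul_of_nonneg_right ?_ hInn)
      rw [hc2a]
      exact le_max_left _ _
  · push_neg at hcase
    obtain ⟨N, hN1, hN2⟩ := exists_N hμ hk hr0 hr1
    have hN : 1 ≤ N := by
      rcases Nat.eq_zero_or_pos N with h0 | h0
      · exfalso
        rw [h0] at hN2
        norm_num at hN2
        exact absurd hN2 (not_lt.2 hcase)
      · exact h0
    obtain ⟨h1, h2⟩ := caseB hμ hC hC1 hk hγ hN hN1 hN2 hr0 hr1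
    constructor
    · calc min c1a c1b * ∫ t in (0:ℝ)..r, ((1 - t) * wHat μ t ^ γ)⁻¹
          ≤ c1b * ∫ t in (0:ℝ)..r, ((1 - t) * wHat μ t ^ γ)⁻¹ :=
            mul_le_mul_of_nonneg_right (min_le_right _ _) hInn
        _ ≤ _ := h1
    · refine h2.trans (mul_le_mul_of_nonneg_right ?_ hInn)
      rw [hc2b]
      exact le_max_right _ _
end
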